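/- arXiv:1409.6828 — 7 statements merged into one kernel-verified Lean document; each statement's English description precedes it below -/
import Mathlib

section
/- Let G be a simple graph on N vertices and let Q = (q_1, q_2, …, q_l) with l ≥ 1 be a shortest path between its endpoints (a path whose length equals the graph distance between q_1 and q_l). Then the sum of the degrees of the vertices on the path satisfies Σ_{k=1}^{l} |N_{q_k}| ≤ 2l + 3(N − l) < 3N. -/
open Finset

variable {V : Type*} {G : SimpleGraph V} {x y : V}

private lemma exists_subwalk (p : G.Walk x y) :
    ∀ d i, i + d ≤ p.length → ∃ w : G.Walk (p.getVert i) (p.getVert (i + d)), w.length = d := by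
  intro d
  induction d with
  | zero => intro i _; exact ⟨(SimpleGraph.Walk.nil).copy rfl (by rw [Nat.add_zero]), by simp⟩
  | succ d ih =>
    intro i h
    obtain ⟨w, hw⟩ := ih i (by omega)
    have hadj : G.Adj (p.getVert (i + d)) (p.getVert (i + d + 1)) :=
      p.adj_getVert_succ (by omega)
    exact ⟨w.concat hadj, by simp [hw]⟩

private lemma dist_getVert_le (p : G.Walk x y) {i j : ℕ} (hij : i ≤ j) (hj : j ≤ p.length) :
    G.dist (p.getVert i) (p.getVert j) ≤ j - i := by
  obtain ⟨w, hw⟩ := exists_subwalk p (j - i) i (by omega)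
  have : p.getVert (i + (j - i)) = p.getVert j := by congr 1; omega
  calc G.dist (p.getVert i) (p.getVert j) ≤ (w.copy rfl this).length := SimpleGraph.dist_le _
    _ = j - i := by simpa using hw

private lemma dist_getVert_eq (p : G.Walk x y) (hsh : p.length = G.dist x y)
    {i j : ℕ} (hij : i ≤ j) (hj : j ≤ p.length) :
    G.dist (p.getVert i) (p.getVert j) = j - i := by
  refine le_antisymm (dist_getVert_le p hij hj) ?_
  obtain ⟨w1, hw1⟩ := exists_subwalk p i 0 (by omega)
  obtain ⟨w3, hw3⟩ := exists_subwalk p (p.length - j) j (by omega)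
  obtain ⟨w2, hw2⟩ := exists_subwalk p (j - i) i (by omega)
  have hr : G.Reachable (p.getVert i) (p.getVert j) := by
    have : p.getVert (i + (j - i)) = p.getVert j := by congr 1; omega
    exact ⟨w2.copy rfl this⟩
  obtain ⟨q, hq⟩ := hr.exists_walk_length_eq_dist
  have e1 : p.getVert 0 = x := p.getVert_zero
  have e2 : p.getVert (0 + i) = p.getVert i := by congr 1; omega
  have e3 : p.getVert (j + (p.length - j)) = y := by
    rw [show j + (p.length - j) = p.length by omega]; exact p.getVert_length
  set W := ((w1.copy e1 e2).append q).append (w3.copy rfl e3) with hW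
  have hlen : W.length = i + G.dist (p.getVert i) (p.getVert j) + (p.length - j) := by
    simp [hW, hw1, hw3, hq]
  have := SimpleGraph.dist_le W
  rw [hlen, ← hsh] at this
  omega

private lemma getVert_inj (p : G.Walk x y) (hsh : p.length = G.dist x y)
    {i j : ℕ} (hi : i ≤ p.length) (hj : j ≤ p.length) (h : p.getVert i = p.getVert j) :
    i = j := by
  rcases le_total i j with hle | hle
  · have := dist_getVert_eq p hsh hle hj; rw [h, SimpleGraph.dist_self] at this; omega
  · have := dist_getVert_eq p hsh hle hi; rw [h, SimpleGraph.dist_self] at this; omega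

private lemma window (p : G.Walk x y) (hsh : p.length = G.dist x y) {v : V} {i j : ℕ}
    (hi : G.Adj v (p.getVert i)) (hj : G.Adj v (p.getVert j)) (hij : i ≤ j)
    (hjl : j ≤ p.length) : j ≤ i + 2 := by
  have hw : G.dist (p.getVert i) (p.getVert j) ≤ 2 :=
    SimpleGraph.dist_le (SimpleGraph.Walk.cons hi.symm (SimpleGraph.Walk.cons hj .nil))
  have := dist_getVert_eq p hsh hij hjl
  omega

/-- for a shortest path `Q = (q_1, …, q_l)` (with `l = p.length + 1 ≥ 1`
vertices) in a simple graph on `N` vertices, the sum of the degrees of the vertices on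
the path satisfies `∑_{k=1}^l |N_{q_k}| ≤ 2l + 3(N − l) < 3N`. -/
theorem shortestPath_degree_sum_lt_three_mul {N : ℕ} (G : SimpleGraph (Fin N))
    [DecidableRel G.Adj] {x y : Fin N} (p : G.Walk x y) (hp : p.IsPath)
    (hsh : p.length = G.dist x y) :
    (∑ k ∈ Finset.range (p.length + 1), G.degree (p.getVert k))
        ≤ 2 * (p.length + 1) + 3 * (N - (p.length + 1)) ∧
    2 * (p.length + 1) + 3 * (N - (p.length + 1)) < 3 * N := by
  classical
  set l := p.length + 1 with hl
  set S : Finset (Fin N) := (Finset.range l).image p.getVert with hS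
  have hScard : S.card = l := by
    rw [hS, Finset.card_image_of_injOn, Finset.card_range]
    intro a ha b hb hab
    exact getVert_inj p hsh (by simp at ha; omega) (by simp at hb; omega) hab
  have hlN : l ≤ N := by
    calc l = S.card := hScard.symm
      _ ≤ Fintype.card (Fin N) := Finset.card_le_univ S
      _ = N := Fintype.card_fin N
  -- define f
  set f : Fin N → ℕ := fun v => ((Finset.range l).filter (fun k => G.Adj v (p.getVert k))).card
    with hf
  have hsum : (∑ k ∈ Finset.range l, G.degree (p.getVert k)) = ∑ v : Fin N, f v := by
    have : ∀ k, G.degree (p.getVert k) =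
        ∑ v : Fin N, if G.Adj v (p.getVert k) then 1 else 0 := by
      intro k
      rw [← SimpleGraph.card_neighborFinset_eq_degree, SimpleGraph.neighborFinset_eq_filter,
        Finset.card_filter]
      exact Finset.sum_congr rfl fun v _ => by simp only [G.adj_comm]
    simp only [this, hf, Finset.card_filter]
    rw [Finset.sum_comm]
  -- bound f off the path
  have hf3 : ∀ v : Fin N, f v ≤ 3 := by
    intro v
    rw [hf]
    set K := (Finset.range l).filter (fun k => G.Adj v (p.getVert k)) with hK
    rcases K.eq_empty_or_nonempty with h | h
    · simp only [← hK, h]; simp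
    · set m := K.min' h with hm
      have hmK := K.min'_mem h
      have hsub : K ⊆ Finset.Icc m (m + 2) := by
        intro k hk
        simp only [hK, Finset.mem_filter, Finset.mem_range] at hk hmK
        have h2 : k ≤ m + 2 :=
          window p hsh hmK.2 hk.2 (K.min'_le k (by simp [hK, Finset.mem_filter]; exact ⟨hk.1, hk.2⟩)) (by omega)
        simp only [Finset.mem_Icc]
        exact ⟨K.min'_le k (by simp [hK, Finset.mem_filter]; exact ⟨hk.1, hk.2⟩), h2⟩
      calc (Finset.filter (fun k => G.Adj v (p.getVert k)) (Finset.range l)).card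
          ≤ (Finset.Icc m (m + 2)).card := Finset.card_le_card (hK ▸ hsub)
        _ = 3 := by rw [Nat.card_Icc]; omega
  -- bound f on the path
  have hf2 : ∀ v ∈ S, f v ≤ 2 := by
    intro v hv
    simp only [hS, Finset.mem_image, Finset.mem_range] at hv
    obtain ⟨m, hm, rfl⟩ := hv
    rw [hf]
    have hsub : (Finset.range l).filter (fun k => G.Adj (p.getVert m) (p.getVert k)) ⊆
        ({m - 1, m + 1} : Finset ℕ) := by
      intro k hk
      simp only [Finset.mem_filter, Finset.mem_range] at hk
      have hd1 : G.dist (p.getVert m) (p.getVert k) = 1 :=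
        SimpleGraph.dist_eq_one_iff_adj.mpr hk.2
      rcases le_total m k with hle | hle
      · have := dist_getVert_eq p hsh hle (by omega)
        rw [hd1] at this
        simp; omega
      · have := dist_getVert_eq p hsh hle (by omega)
        rw [SimpleGraph.dist_comm, hd1] at this
        simp; omega
    calc _ ≤ ({m - 1, m + 1} : Finset ℕ).card := Finset.card_le_card hsub
      _ ≤ 2 := Finset.card_insert_le _ _ |>.trans (by simp)
  -- combine
  have hsplit : (∑ v : Fin N, f v) = (∑ v ∈ S, f v) + ∑ v ∈ Sᶜ, f v :=
    (Finset.sum_add_sum_compl S f).symm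
  have hb1 : (∑ v ∈ S, f v) ≤ 2 * l := by
    calc (∑ v ∈ S, f v) ≤ ∑ _v ∈ S, 2 := Finset.sum_le_sum hf2
      _ = 2 * l := by rw [Finset.sum_const, hScard]; ring
  have hb2 : (∑ v ∈ Sᶜ, f v) ≤ 3 * (N - l) := by
    calc (∑ v ∈ Sᶜ, f v) ≤ ∑ _v ∈ Sᶜ, 3 := Finset.sum_le_sum fun v _ => hf3 v
      _ = 3 * (N - l) := by
        rw [Finset.sum_const, Finset.card_compl, hScard, Fintype.card_fin]; ring
  constructor
  · rw [hsum, hsplit]; omega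
  · omega
end

section
/- (Lemma 2) Let G be a connected simple graph on N ≥ 2 vertices with biased random walk matrix P^B. Fix a vertex y and let h_y : V → ℝ be a hitting-time solution with target y (so h_y equals the expected hitting time H(·,y) of the biased random walk). Then h_y(x) < 3N³ for every vertex x; in particular the hitting time of the biased random walk satisfies H(G) = max_{x,y} H(x,y) < 3N³. -/
/-- The biased random walk transition matrix `P^B` of a graph `G` on `Fin N`:
`P^B i j = (1/N)(1/deg i + 1/deg j)` for edges, `P^B i i = 1 - 1/N - ∑_{k ∈ N_i} 1/(N deg k)`,
and `0` otherwise. -/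
noncomputable def PB {N : ℕ} (G : SimpleGraph (Fin N)) [DecidableRel G.Adj]
    (i j : Fin N) : ℝ :=
  if i = j then
    1 - 1 / (N : ℝ) - ∑ k ∈ G.neighborFinset i, 1 / ((N : ℝ) * (G.degree k : ℝ))
  else if G.Adj i j then
    (1 / (N : ℝ)) * (1 / (G.degree i : ℝ) + 1 / (G.degree j : ℝ))
  else 0

open Finset SimpleGraph

variable {N : ℕ} {G : SimpleGraph (Fin N)} [DecidableRel G.Adj]

lemma aux_deg_pos (hN : 2 ≤ N) (hconn : G.Connected) (v : Fin N) : 0 < G.degree v := by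
  rw [G.degree_pos_iff_exists_adj]
  have hcard : 1 < Fintype.card (Fin N) := by rw [Fintype.card_fin]; omega
  obtain ⟨w, hw⟩ := Fintype.exists_ne_of_one_lt_card hcard v
  obtain ⟨p⟩ := hconn v w
  cases p with
  | nil => exact absurd rfl hw
  | cons hadj q => exact ⟨_, hadj⟩

lemma aux_PB_symm (i j : Fin N) : PB G i j = PB G j i := by
  unfold PB
  by_cases hij : i = j
  · subst hij; simp
  · have hji : ¬ j = i := fun hh => hij hh.symm
    simp only [hij, hji, if_false]
    by_cases ha : G.Adj i j
    · simp only [ha, ha.symm, if_true]; ring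
    · have ha' : ¬ G.Adj j i := fun hh => ha hh.symm
      simp [ha, ha']

lemma aux_PB_nonneg (hN : 2 ≤ N) (hdeg : ∀ v, 0 < G.degree v) (i j : Fin N) :
    0 ≤ PB G i j := by
  have hn2 : (2:ℝ) ≤ (N:ℝ) := by exact_mod_cast hN
  have hn0 : (0:ℝ) < (N:ℝ) := by linarith
  unfold PB
  by_cases hij : i = j
  · subst hij
    rw [if_pos rfl]
    have hS : ∑ k ∈ G.neighborFinset i, 1 / ((N : ℝ) * (G.degree k : ℝ))
        ≤ ∑ _k ∈ G.neighborFinset i, 1 / (N:ℝ) := by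
      apply Finset.sum_le_sum
      intro k _
      have hd : (1:ℝ) ≤ (G.degree k : ℝ) := by exact_mod_cast hdeg k
      have hle : (N:ℝ) ≤ (N:ℝ) * (G.degree k : ℝ) := by nlinarith
      exact one_div_le_one_div_of_le hn0 hle
    have hltN : G.degree i + 1 ≤ N := by
      have := G.degree_lt_card_verts i
      simp only [Fintype.card_fin] at this
      omega
    have hcard : (G.degree i : ℝ) ≤ (N:ℝ) - 1 := by
      have : ((G.degree i : ℝ) + 1) ≤ (N:ℝ) := by exact_mod_cast hltN
      linarith
    have hsum : ∑ _k ∈ G.neighborFinset i, 1 / (N:ℝ) = (G.degree i : ℝ) * (1/(N:ℝ)) := by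
      rw [Finset.sum_const, G.card_neighborFinset_eq_degree, nsmul_eq_mul]
    rw [hsum] at hS
    have hlast : (G.degree i : ℝ) * (1/(N:ℝ)) ≤ ((N:ℝ) - 1) * (1/(N:ℝ)) := by
      apply mul_le_mul_of_nonneg_right hcard
      positivity
    have hfe : ((N:ℝ) - 1) * (1/(N:ℝ)) = 1 - 1/(N:ℝ) := by field_simp
    nlinarith
  · simp only [hij, if_false]
    by_cases ha : G.Adj i j
    · simp only [ha, if_true]
      positivity
    · simp [ha]

lemma aux_PB_row_sum (hN : 2 ≤ N) (hdeg : ∀ v, 0 < G.degree v) (x : Fin N) :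
    ∑ z, PB G x z = 1 := by
  have hn0 : (0:ℝ) < (N:ℝ) := by
    have : 0 < N := by omega
    exact_mod_cast this
  have hdx : (0:ℝ) < (G.degree x : ℝ) := by exact_mod_cast hdeg x
  have hsplit : ∑ z, PB G x z = ∑ z ∈ univ.erase x, PB G x z + PB G x x :=
    (Finset.sum_erase_add _ _ (mem_univ x)).symm
  have hoff : ∑ z ∈ univ.erase x, PB G x z
      = ∑ z ∈ G.neighborFinset x, (1 / (N : ℝ)) * (1 / (G.degree x : ℝ) + 1 / (G.degree z : ℝ)) := by
    have h1 : ∑ z ∈ univ.erase x, PB G x z = ∑ z ∈ univ.erase x,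
        (if G.Adj x z then (1 / (N : ℝ)) * (1 / (G.degree x : ℝ) + 1 / (G.degree z : ℝ)) else 0) := by
      apply Finset.sum_congr rfl
      intro z hz
      have hzx : z ≠ x := (Finset.mem_erase.1 hz).1
      unfold PB
      rw [if_neg (fun hh => hzx hh.symm)]
    rw [h1, ← Finset.sum_filter]
    apply Finset.sum_congr _ (fun _ _ => rfl)
    ext z
    simp only [Finset.mem_filter, Finset.mem_erase, mem_univ, and_true, true_and,
      mem_neighborFinset]
    constructor
    · rintro ⟨_, ha⟩; exact ha
    · intro ha; exact ⟨ha.ne', ha⟩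
  have hexp : ∑ z ∈ G.neighborFinset x, (1 / (N : ℝ)) * (1 / (G.degree x : ℝ) + 1 / (G.degree z : ℝ))
      = 1/(N:ℝ) + ∑ z ∈ G.neighborFinset x, 1 / ((N : ℝ) * (G.degree z : ℝ)) := by
    have hterm : ∀ z ∈ G.neighborFinset x,
        (1 / (N : ℝ)) * (1 / (G.degree x : ℝ) + 1 / (G.degree z : ℝ))
        = 1/((N:ℝ) * (G.degree x : ℝ)) + 1 / ((N : ℝ) * (G.degree z : ℝ)) := by
      intro z _
      have hdz : (0:ℝ) < (G.degree z : ℝ) := by exact_mod_cast hdeg z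
      field_simp
    rw [Finset.sum_congr rfl hterm, Finset.sum_add_distrib]
    congr 1
    rw [Finset.sum_const, G.card_neighborFinset_eq_degree, nsmul_eq_mul]
    field_simp
  have hdiag : PB G x x = 1 - 1 / (N : ℝ)
      - ∑ k ∈ G.neighborFinset x, 1 / ((N : ℝ) * (G.degree k : ℝ)) := by
    unfold PB; simp
  rw [hsplit, hoff, hexp, hdiag]
  ring

lemma aux_PB_col_sum (hN : 2 ≤ N) (hdeg : ∀ v, 0 < G.degree v) (z : Fin N) :
    ∑ x, PB G x z = 1 := by
  have : ∑ x, PB G x z = ∑ x, PB G z x :=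
    Finset.sum_congr rfl (fun x _ => aux_PB_symm x z)
  rw [this, aux_PB_row_sum hN hdeg]

lemma aux_h_nonneg (hN : 2 ≤ N) (hdeg : ∀ v, 0 < G.degree v) (y : Fin N)
    (h : Fin N → ℝ) (h0 : h y = 0)
    (hrec : ∀ x, x ≠ y → h x = 1 + ∑ z, PB G x z * h z) :
    ∀ x, 0 ≤ h x := by
  obtain ⟨xm, _, hxm⟩ := Finset.exists_min_image univ h ⟨y, mem_univ y⟩
  suffices hs : 0 ≤ h xm from fun x => le_trans hs (hxm x (mem_univ x))
  by_cases hxy : xm = y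
  · subst hxy; rw [h0]
  · exfalso
    have h1 : h xm = 1 + ∑ z, PB G xm z * h z := hrec xm hxy
    have h2 : ∑ z, PB G xm z * h xm ≤ ∑ z, PB G xm z * h z := by
      apply Finset.sum_le_sum
      intro z _
      exact mul_le_mul_of_nonneg_left (hxm z (mem_univ z)) (aux_PB_nonneg hN hdeg xm z)
    have h3 : ∑ z, PB G xm z * h xm = h xm := by
      rw [← Finset.sum_mul, aux_PB_row_sum hN hdeg, one_mul]
    linarith

lemma aux_energy (hN : 2 ≤ N) (hdeg : ∀ v, 0 < G.degree v) (y : Fin N)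
    (h : Fin N → ℝ) (h0 : h y = 0)
    (hrec : ∀ x, x ≠ y → h x = 1 + ∑ z, PB G x z * h z) :
    ∑ x, ∑ z, PB G x z * (h x - h z)^2 = 2 * ∑ x, h x := by
  have keyA : ∑ x, h x * (h x - ∑ z, PB G x z * h z) = ∑ x, h x := by
    apply Finset.sum_congr rfl
    intro x _
    by_cases hxy : x = y
    · subst hxy; rw [h0]; ring
    · rw [hrec x hxy]; ring
  have expand1 : ∑ x, h x * (h x - ∑ z, PB G x z * h z)
      = ∑ x, (h x)^2 - ∑ x, ∑ z, PB G x z * (h x * h z) := by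
    rw [← Finset.sum_sub_distrib]
    apply Finset.sum_congr rfl
    intro x _
    have hmul : h x * ∑ z, PB G x z * h z = ∑ z, PB G x z * (h x * h z) := by
      rw [Finset.mul_sum]
      exact Finset.sum_congr rfl (fun z _ => by ring)
    rw [mul_sub, hmul]; ring
  have step1 : ∑ x, ∑ z, PB G x z * (h x - h z)^2
      = ∑ x, ∑ z, (PB G x z * (h x)^2 + PB G x z * (h z)^2
          - 2 * (PB G x z * (h x * h z))) := by
    apply Finset.sum_congr rfl; intro x _
    apply Finset.sum_congr rfl; intro z _
    ring
  have step2 : ∑ x, ∑ z, (PB G x z * (h x)^2 + PB G x z * (h z)^2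
          - 2 * (PB G x z * (h x * h z)))
      = (∑ x, ∑ z, PB G x z * (h x)^2) + (∑ x, ∑ z, PB G x z * (h z)^2)
        - 2 * ∑ x, ∑ z, PB G x z * (h x * h z) := by
    simp only [Finset.sum_sub_distrib, Finset.sum_add_distrib, Finset.mul_sum]
  have s3 : ∑ x, ∑ z, PB G x z * (h x)^2 = ∑ x, (h x)^2 := by
    apply Finset.sum_congr rfl; intro x _
    rw [← Finset.sum_mul, aux_PB_row_sum hN hdeg, one_mul]
  have s4 : ∑ x : Fin N, ∑ z, PB G x z * (h z)^2 = ∑ x, (h x)^2 := by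
    rw [Finset.sum_comm]
    apply Finset.sum_congr rfl; intro z _
    rw [← Finset.sum_mul, aux_PB_col_sum hN hdeg, one_mul]
  rw [step1, step2, s3, s4]
  rw [expand1] at keyA
  linarith

lemma aux_dist_le_getVert (hconn : G.Connected) {u v : Fin N} (p : G.Walk u v) :
    ∀ d i, i + d ≤ p.length → G.dist (p.getVert i) (p.getVert (i + d)) ≤ d := by
  intro d
  induction d with
  | zero => intro i _; simp [SimpleGraph.dist_self]
  | succ d ih =>
    intro i hi
    have h1 : G.dist (p.getVert i) (p.getVert (i + d)) ≤ d := ih i (by omega)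
    have hadj : G.Adj (p.getVert (i + d)) (p.getVert (i + d + 1)) :=
      p.adj_getVert_succ (by omega)
    have h2 : G.dist (p.getVert (i + d)) (p.getVert (i + d + 1)) = 1 :=
      SimpleGraph.dist_eq_one_iff_adj.mpr hadj
    have h3 := hconn.dist_triangle (u := p.getVert i) (v := p.getVert (i + d))
      (w := p.getVert (i + d + 1))
    show G.dist (p.getVert i) (p.getVert (i + d + 1)) ≤ d + 1
    calc G.dist (p.getVert i) (p.getVert (i + d + 1))
        ≤ G.dist (p.getVert i) (p.getVert (i + d))
          + G.dist (p.getVert (i + d)) (p.getVert (i + d + 1)) := h3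
      _ ≤ d + 1 := by rw [h2]; exact Nat.add_le_add_right h1 1

lemma aux_dist_ge (hconn : G.Connected) {x₀ y : Fin N} (p : G.Walk x₀ y)
    (hp : p.length = G.dist x₀ y) :
    ∀ i j, i ≤ j → j ≤ p.length → j - i ≤ G.dist (p.getVert i) (p.getVert j) := by
  intro i j hij hj
  have t1 : G.dist x₀ (p.getVert i) ≤ i := by
    have := aux_dist_le_getVert hconn p i 0 (by omega)
    simpa using this
  have t2 : G.dist (p.getVert j) y ≤ p.length - j := by
    have := aux_dist_le_getVert hconn p (p.length - j) j (by omega)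
    have e : j + (p.length - j) = p.length := by omega
    rw [e, p.getVert_length] at this
    exact this
  have t3 : G.dist x₀ y ≤ G.dist x₀ (p.getVert i) + G.dist (p.getVert i) (p.getVert j)
      + G.dist (p.getVert j) y :=
    le_trans (hconn.dist_triangle (v := p.getVert j))
      (Nat.add_le_add_right (hconn.dist_triangle (v := p.getVert i)) _)
  rw [← hp] at t3
  generalize G.dist x₀ (p.getVert i) = a at t1 t3
  generalize G.dist (p.getVert i) (p.getVert j) = b at t3 ⊢
  generalize G.dist (p.getVert j) y = c at t2 t3
  omega

lemma aux_getVert_inj (hconn : G.Connected) {x₀ y : Fin N} (p : G.Walk x₀ y)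
    (hp : p.length = G.dist x₀ y) :
    ∀ i j, i ≤ p.length → j ≤ p.length → p.getVert i = p.getVert j → i = j := by
  have key : ∀ i j, i ≤ j → j ≤ p.length → p.getVert i = p.getVert j → i = j := by
    intro i j hij hj he
    have hge := aux_dist_ge hconn p hp i j hij hj
    rw [he, SimpleGraph.dist_self] at hge
    omega
  intro i j hi hj he
  rcases le_total i j with hle | hle
  · exact key i j hle hj he
  · exact (key j i hle hi he.symm).symm

lemma aux_degsum (hconn : G.Connected) {x₀ y : Fin N} (p : G.Walk x₀ y)
    (hp : p.length = G.dist x₀ y) :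
    ∑ i ∈ Finset.range (p.length + 1), G.degree (p.getVert i) ≤ 3 * N := by
  have hgap : ∀ (u : Fin N) i j, i ≤ j → j ≤ p.length → G.Adj u (p.getVert i) →
      G.Adj u (p.getVert j) → j ≤ i + 2 := by
    intro u i j hij hj h1 h2
    have hd1 : G.dist (p.getVert i) u ≤ 1 :=
      le_of_eq (SimpleGraph.dist_eq_one_iff_adj.mpr h1.symm)
    have hd2 : G.dist u (p.getVert j) ≤ 1 :=
      le_of_eq (SimpleGraph.dist_eq_one_iff_adj.mpr h2)
    have htri : G.dist (p.getVert i) (p.getVert j)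
        ≤ G.dist (p.getVert i) u + G.dist u (p.getVert j) := hconn.dist_triangle
    have hge := aux_dist_ge hconn p hp i j hij hj
    generalize G.dist (p.getVert i) (p.getVert j) = b at htri hge
    generalize G.dist (p.getVert i) u = a at hd1 htri
    generalize G.dist u (p.getVert j) = c at hd2 htri
    omega
  have hdeg_eq : ∀ v : Fin N, G.degree v = (univ.filter (fun u => G.Adj u v)).card := by
    intro v
    rw [← G.card_neighborFinset_eq_degree]
    congr 1
    ext u
    simp [mem_neighborFinset, SimpleGraph.adj_comm]
  calc ∑ i ∈ Finset.range (p.length + 1), G.degree (p.getVert i)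
      = ∑ i ∈ Finset.range (p.length + 1), ∑ u : Fin N,
          (if G.Adj u (p.getVert i) then 1 else 0) := by
        apply Finset.sum_congr rfl; intro i _
        rw [hdeg_eq, Finset.card_filter]
    _ = ∑ u : Fin N, ∑ i ∈ Finset.range (p.length + 1),
          (if G.Adj u (p.getVert i) then 1 else 0) := Finset.sum_comm
    _ = ∑ u : Fin N,
          ((Finset.range (p.length + 1)).filter (fun i => G.Adj u (p.getVert i))).card := by
        apply Finset.sum_congr rfl; intro u _
        rw [Finset.card_filter]
    _ ≤ ∑ _u : Fin N, 3 := by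
        apply Finset.sum_le_sum
        intro u _
        set S := (Finset.range (p.length + 1)).filter (fun i => G.Adj u (p.getVert i)) with hS
        rcases S.eq_empty_or_nonempty with he | hne
        · rw [he]; simp
        · obtain ⟨hmr, hma⟩ := Finset.mem_filter.mp (S.min'_mem hne)
          rw [Finset.mem_range] at hmr
          have hsub : S ⊆ Finset.Icc (S.min' hne) (S.min' hne + 2) := by
            intro i hi
            obtain ⟨hir, hia⟩ := Finset.mem_filter.mp hi
            rw [Finset.mem_range] at hir
            rw [Finset.mem_Icc]
            refine ⟨S.min'_le i hi, ?_⟩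
            exact hgap u (S.min' hne) i (S.min'_le i hi) (by omega) hma hia
          calc S.card ≤ (Finset.Icc (S.min' hne) (S.min' hne + 2)).card :=
                Finset.card_le_card hsub
            _ = 3 := by rw [Nat.card_Icc]; omega
    _ = 3 * N := by simp [mul_comm]

/-- Lemma 2: for a connected simple graph on `N ≥ 2` vertices, any
hitting-time solution `h` with target `y` (i.e. `h y = 0` and
`h x = 1 + ∑ z, P^B x z * h z` for `x ≠ y`, characterizing the expected hitting time
`H(·,y)` of the biased random walk) satisfies `h x < 3 N³` for every vertex `x`;
hence the hitting time of the biased random walk satisfies `H(G) < 3 N³`. -/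
theorem hitting_time_lt_three_N_cubed {N : ℕ} (hN : 2 ≤ N)
    (G : SimpleGraph (Fin N)) [DecidableRel G.Adj] (hconn : G.Connected)
    (y : Fin N) (h : Fin N → ℝ) (h0 : h y = 0)
    (hrec : ∀ x, x ≠ y → h x = 1 + ∑ z, PB G x z * h z) :
    ∀ x, h x < 3 * (N : ℝ) ^ 3 := by
  have hdeg : ∀ v, 0 < G.degree v := aux_deg_pos hN hconn
  have hnn : ∀ x, 0 ≤ h x := aux_h_nonneg hN hdeg y h h0 hrec
  have hn2 : (2:ℝ) ≤ (N:ℝ) := by exact_mod_cast hN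
  have hn0 : (0:ℝ) < (N:ℝ) := by linarith
  obtain ⟨x₀, _, hx₀⟩ := Finset.exists_max_image univ h ⟨y, Finset.mem_univ y⟩
  set M := h x₀ with hM
  suffices hMlt : M < 3 * (N:ℝ)^3 from
    fun x => lt_of_le_of_lt (hx₀ x (Finset.mem_univ x)) hMlt
  by_cases hMzero : M ≤ 0
  · have : (0:ℝ) < 3*(N:ℝ)^3 := by positivity
    linarith
  push_neg at hMzero
  obtain ⟨p, hp⟩ := hconn.exists_walk_length_eq_dist x₀ y
  have hp' : p.length = G.dist x₀ y := hp
  set ℓ := p.length with hℓ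
  have hadj : ∀ i, i < ℓ → G.Adj (p.getVert i) (p.getVert (i+1)) :=
    fun i hi => p.adj_getVert_succ hi
  set w : ℕ → ℝ := fun i => PB G (p.getVert i) (p.getVert (i+1)) with hwdef
  set D : ℕ → ℝ := fun i => h (p.getVert i) - h (p.getVert (i+1)) with hDdef
  have hw_eq : ∀ i, i < ℓ → w i = (1/(N:ℝ)) * (1/(G.degree (p.getVert i):ℝ)
      + 1/(G.degree (p.getVert (i+1)):ℝ)) := by
    intro i hi
    simp only [hwdef]
    unfold PB
    rw [if_neg (hadj i hi).ne, if_pos (hadj i hi)]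
  have hw_pos : ∀ i, i < ℓ → 0 < w i := by
    intro i hi
    rw [hw_eq i hi]
    have d1 : (0:ℝ) < (G.degree (p.getVert i):ℝ) := by exact_mod_cast hdeg _
    have d2 : (0:ℝ) < (G.degree (p.getVert (i+1)):ℝ) := by exact_mod_cast hdeg _
    positivity
  have hr_le : ∀ i, i < ℓ → 1 / w i ≤ (N:ℝ) * (G.degree (p.getVert i) : ℝ) := by
    intro i hi
    have d1 : (0:ℝ) < (G.degree (p.getVert i):ℝ) := by exact_mod_cast hdeg _
    have d2 : (0:ℝ) < (G.degree (p.getVert (i+1)):ℝ) := by exact_mod_cast hdeg _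
    have hlow : (1/(N:ℝ)) * (1/(G.degree (p.getVert i):ℝ)) ≤ w i := by
      rw [hw_eq i hi]
      have h1 : (0:ℝ) ≤ 1/(G.degree (p.getVert (i+1)):ℝ) := by positivity
      have h2 : (0:ℝ) ≤ 1/(N:ℝ) := by positivity
      nlinarith
    have hlowpos : (0:ℝ) < (1/(N:ℝ)) * (1/(G.degree (p.getVert i):ℝ)) := by positivity
    calc 1 / w i ≤ 1 / ((1/(N:ℝ)) * (1/(G.degree (p.getVert i):ℝ))) :=
          one_div_le_one_div_of_le hlowpos hlow
      _ = (N:ℝ) * (G.degree (p.getVert i):ℝ) := by field_simp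
  have hR : ∑ i ∈ Finset.range ℓ, 1 / w i ≤ 3 * (N:ℝ)^2 := by
    calc ∑ i ∈ Finset.range ℓ, 1 / w i
        ≤ ∑ i ∈ Finset.range ℓ, (N:ℝ) * (G.degree (p.getVert i) : ℝ) := by
          apply Finset.sum_le_sum
          intro i hi
          exact hr_le i (Finset.mem_range.mp hi)
      _ ≤ ∑ i ∈ Finset.range (ℓ+1), (N:ℝ) * (G.degree (p.getVert i) : ℝ) := by
          apply Finset.sum_le_sum_of_subset_of_nonneg
            (Finset.range_subset_range.mpr (Nat.le_succ ℓ))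
          intro i _ _
          positivity
      _ = (N:ℝ) * ∑ i ∈ Finset.range (ℓ+1), (G.degree (p.getVert i) : ℝ) := by
          rw [Finset.mul_sum]
      _ ≤ (N:ℝ) * (3*(N:ℝ)) := by
          apply mul_le_mul_of_nonneg_left _ hn0.le
          have hds := aux_degsum hconn p hp'
          calc ∑ i ∈ Finset.range (ℓ+1), (G.degree (p.getVert i) : ℝ)
              = ((∑ i ∈ Finset.range (ℓ+1), G.degree (p.getVert i) : ℕ) : ℝ) := by
                push_cast; rfl
            _ ≤ ((3*N : ℕ):ℝ) := by exact_mod_cast hds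
            _ = 3*(N:ℝ) := by push_cast; ring
      _ = 3*(N:ℝ)^2 := by ring
  have hE := aux_energy hN hdeg y h h0 hrec
  set S1 := ∑ x, h x with hS1
  have hinj := aux_getVert_inj hconn p hp'
  have hEpath : ∑ i ∈ Finset.range ℓ, w i * (D i)^2 ≤ S1 := by
    set f : Fin N × Fin N → ℝ := fun q => PB G q.1 q.2 * (h q.1 - h q.2)^2 with hf
    have hfnn : ∀ q : Fin N × Fin N, 0 ≤ f q :=
      fun q => mul_nonneg (aux_PB_nonneg hN hdeg _ _) (sq_nonneg _)
    have hinj1 : ∀ i ∈ Finset.range ℓ, ∀ j ∈ Finset.range ℓ,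
        (p.getVert i, p.getVert (i+1)) = (p.getVert j, p.getVert (j+1)) → i = j := by
      intro i hi j hj he
      rw [Finset.mem_range] at hi hj
      exact hinj i j (by omega) (by omega) (congrArg Prod.fst he)
    have hinj2 : ∀ i ∈ Finset.range ℓ, ∀ j ∈ Finset.range ℓ,
        (p.getVert (i+1), p.getVert i) = (p.getVert (j+1), p.getVert j) → i = j := by
      intro i hi j hj he
      rw [Finset.mem_range] at hi hj
      have := hinj (i+1) (j+1) (by omega) (by omega) (congrArg Prod.fst he)
      omega
    set T1 := (Finset.range ℓ).image (fun i => (p.getVert i, p.getVert (i+1))) with hT1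
    set T2 := (Finset.range ℓ).image (fun i => (p.getVert (i+1), p.getVert i)) with hT2
    have hsum1 : ∑ q ∈ T1, f q = ∑ i ∈ Finset.range ℓ, w i * (D i)^2 := by
      rw [hT1, Finset.sum_image hinj1]
    have hsum2 : ∑ q ∈ T2, f q = ∑ i ∈ Finset.range ℓ, w i * (D i)^2 := by
      rw [hT2, Finset.sum_image hinj2]
      apply Finset.sum_congr rfl
      intro i _
      simp only [hf, hwdef, hDdef]
      rw [aux_PB_symm]
      ring
    have hdisj : Disjoint T1 T2 := by
      rw [Finset.disjoint_left]
      intro q hq1 hq2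
      rw [hT1, Finset.mem_image] at hq1
      rw [hT2, Finset.mem_image] at hq2
      obtain ⟨i, hi, hqi⟩ := hq1
      obtain ⟨j, hj, hqj⟩ := hq2
      rw [Finset.mem_range] at hi hj
      have he := hqi.trans hqj.symm
      have e1 := hinj i (j+1) (by omega) (by omega) (congrArg Prod.fst he)
      have e2 := hinj (i+1) j (by omega) (by omega) (congrArg Prod.snd he)
      omega
    have hEprod : ∑ x, ∑ z, PB G x z * (h x - h z)^2 = ∑ q ∈ univ ×ˢ univ, f q := by
      rw [Finset.sum_product]
    have hle : ∑ q ∈ T1 ∪ T2, f q ≤ ∑ x, ∑ z, PB G x z * (h x - h z)^2 := by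
      rw [hEprod]
      apply Finset.sum_le_sum_of_subset_of_nonneg
      · intro q _
        simp [Finset.mem_product]
      · intro q _ _
        exact hfnn q
    rw [Finset.sum_union hdisj, hsum1, hsum2, hE] at hle
    linarith
  have hS1le : S1 ≤ ((N:ℝ) - 1) * M := by
    have hsplit : S1 = ∑ x ∈ univ.erase y, h x := by
      rw [hS1, ← Finset.sum_erase_add _ _ (Finset.mem_univ y), h0, add_zero]
    rw [hsplit]
    have hb := Finset.sum_le_card_nsmul (univ.erase y) h M
      (fun x _ => hx₀ x (Finset.mem_univ x))
    rw [Finset.card_erase_of_mem (Finset.mem_univ y), Finset.card_univ,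
      Fintype.card_fin, nsmul_eq_mul] at hb
    have hcast : ((N - 1 : ℕ) : ℝ) = (N:ℝ) - 1 := by
      have h1 : 1 ≤ N := by omega
      push_cast [h1]
      ring
    rw [hcast] at hb
    exact hb
  have htel : M = ∑ i ∈ Finset.range ℓ, D i := by
    simp only [hDdef]
    rw [Finset.sum_range_sub' (fun i => h (p.getVert i)) ℓ]
    simp only [hℓ, p.getVert_zero, p.getVert_length, h0, hM, sub_zero]
  have hMabs : M ≤ ∑ i ∈ Finset.range ℓ, |D i| := by
    rw [htel]
    exact Finset.sum_le_sum (fun i _ => le_abs_self (D i))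
  have habs_nn : (0:ℝ) ≤ ∑ i ∈ Finset.range ℓ, |D i| :=
    Finset.sum_nonneg (fun i _ => abs_nonneg _)
  have hCS := Finset.sum_mul_sq_le_sq_mul_sq (Finset.range ℓ)
    (fun i => Real.sqrt (1 / w i)) (fun i => Real.sqrt (w i) * |D i|)
  have hCS1 : ∑ i ∈ Finset.range ℓ, Real.sqrt (1 / w i) * (Real.sqrt (w i) * |D i|)
      = ∑ i ∈ Finset.range ℓ, |D i| := by
    apply Finset.sum_congr rfl
    intro i hi
    have hwp := hw_pos i (Finset.mem_range.mp hi)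
    rw [← mul_assoc, ← Real.sqrt_mul (by positivity), one_div_mul_cancel hwp.ne',
      Real.sqrt_one, one_mul]
  have hCS2 : ∑ i ∈ Finset.range ℓ, (Real.sqrt (1 / w i))^2
      = ∑ i ∈ Finset.range ℓ, 1 / w i := by
    apply Finset.sum_congr rfl
    intro i hi
    have hwp := hw_pos i (Finset.mem_range.mp hi)
    rw [Real.sq_sqrt (by positivity)]
  have hCS3 : ∑ i ∈ Finset.range ℓ, (Real.sqrt (w i) * |D i|)^2
      = ∑ i ∈ Finset.range ℓ, w i * (D i)^2 := by
    apply Finset.sum_congr rfl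
    intro i hi
    have hwp := hw_pos i (Finset.mem_range.mp hi)
    rw [mul_pow, Real.sq_sqrt hwp.le, sq_abs]
  rw [hCS1, hCS2, hCS3] at hCS
  have hwD_nn : (0:ℝ) ≤ ∑ i ∈ Finset.range ℓ, w i * (D i)^2 := by
    apply Finset.sum_nonneg
    intro i hi
    exact mul_nonneg (hw_pos i (Finset.mem_range.mp hi)).le (sq_nonneg _)
  have hR_nn : (0:ℝ) ≤ ∑ i ∈ Finset.range ℓ, 1 / w i := by
    apply Finset.sum_nonneg
    intro i hi
    exact (one_div_pos.mpr (hw_pos i (Finset.mem_range.mp hi))).le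
  have hfinal : M^2 ≤ (3*(N:ℝ)^2) * (((N:ℝ) - 1) * M) := by
    calc M^2 ≤ (∑ i ∈ Finset.range ℓ, |D i|)^2 := by
          apply pow_le_pow_left₀ hMzero.le hMabs
      _ ≤ (∑ i ∈ Finset.range ℓ, 1 / w i) * ∑ i ∈ Finset.range ℓ, w i * (D i)^2 := hCS
      _ ≤ (3*(N:ℝ)^2) * (((N:ℝ) - 1) * M) := by
          exact mul_le_mul hR (hEpath.trans hS1le) hwD_nn (by positivity)
  nlinarith [hfinal, hMzero, hn2, sq_nonneg ((N:ℝ))]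
end

section
/- (Lemma 3) Let G be a connected simple graph on N ≥ 2 vertices with biased random walk matrix P^B, and for each vertex v let h_v : V → ℝ be a hitting-time solution with target v. Then for all vertices x, y, z the cyclic identity holds: h_y(x) + h_z(y) + h_x(z) = h_z(x) + h_y(z) + h_x(y), i.e., H(x,y) + H(y,z) + H(z,x) = H(x,z) + H(z,y) + H(y,x). -/
lemma PB_symm {N : ℕ} (G : SimpleGraph (Fin N)) [DecidableRel G.Adj] (i j : Fin N) :
    PB G i j = PB G j i := by
  unfold PB
  by_cases hij : i = j
  · subst hij; rfl
  · rw [if_neg hij, if_neg (Ne.symm hij)]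
    by_cases ha : G.Adj i j
    · rw [if_pos ha, if_pos ha.symm]; ring
    · rw [if_neg ha, if_neg (fun h => ha h.symm)]

lemma PB_rowsum {N : ℕ} (hN : 2 ≤ N) (G : SimpleGraph (Fin N)) [DecidableRel G.Adj]
    (hconn : G.Connected) (i : Fin N) : ∑ j, PB G i j = 1 := by
  have hNpos : (0:ℝ) < N := by positivity
  have hdeg : ∀ k : Fin N, (0:ℝ) < G.degree k := by
    intro k
    have h2 : ∃ j, j ≠ k := by
      have : Nontrivial (Fin N) := Fin.nontrivial_iff_two_le.mpr hN
      exact exists_ne k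
    obtain ⟨j, hj⟩ := h2
    obtain ⟨w⟩ := hconn.preconnected k j
    have : 0 < G.degree k := by
      cases w with
      | nil => exact absurd rfl (Ne.symm hj)
      | cons ha p =>
        rw [G.degree_pos_iff_exists_adj]
        exact ⟨_, ha⟩
    exact_mod_cast this
  have hsub : G.neighborFinset i ⊆ Finset.univ.erase i := by
    intro j hj
    rw [SimpleGraph.mem_neighborFinset] at hj
    exact Finset.mem_erase.mpr ⟨hj.ne', Finset.mem_univ j⟩
  rw [← Finset.add_sum_erase _ _ (Finset.mem_univ i)]
  have he : ∑ j ∈ Finset.univ.erase i, PB G i j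
      = ∑ j ∈ G.neighborFinset i, PB G i j := by
    symm
    apply Finset.sum_subset hsub
    intro j hj hnj
    rw [SimpleGraph.mem_neighborFinset] at hnj
    have hne : i ≠ j := (Finset.mem_erase.mp hj).1.symm
    unfold PB
    rw [if_neg hne, if_neg hnj]
  rw [he]
  have hterm : ∀ j ∈ G.neighborFinset i,
      PB G i j = 1 / ((N:ℝ) * (G.degree i : ℝ)) + 1 / ((N:ℝ) * (G.degree j : ℝ)) := by
    intro j hj
    rw [SimpleGraph.mem_neighborFinset] at hj
    unfold PB
    rw [if_neg hj.ne, if_pos hj, mul_add, div_mul_div_comm, div_mul_div_comm, one_mul]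
  rw [Finset.sum_congr rfl hterm, Finset.sum_add_distrib, Finset.sum_const,
    SimpleGraph.card_neighborFinset_eq_degree]
  unfold PB
  rw [if_pos rfl, nsmul_eq_mul]
  have hdi : (G.degree i : ℝ) ≠ 0 := ne_of_gt (hdeg i)
  have hNne : (N:ℝ) ≠ 0 := ne_of_gt hNpos
  have : (G.degree i : ℝ) * (1 / ((N:ℝ) * (G.degree i : ℝ))) = 1 / (N:ℝ) := by
    field_simp
  rw [this]
  ring

/-- Lemma 3: for a connected simple graph on `N ≥ 2` vertices and a family
`h` of hitting-time solutions of the biased random walk (`h v u` is the expected hitting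
time `H(u, v)` from `u` to target `v`), the cyclic identity holds:
`H(x,y) + H(y,z) + H(z,x) = H(x,z) + H(z,y) + H(y,x)`. -/
theorem hitting_time_cyclic_identity {N : ℕ} (hN : 2 ≤ N)
    (G : SimpleGraph (Fin N)) [DecidableRel G.Adj] (hconn : G.Connected)
    (h : Fin N → Fin N → ℝ) (h0 : ∀ v, h v v = 0)
    (hrec : ∀ v x, x ≠ v → h v x = 1 + ∑ z, PB G x z * h v z)
    (x y z : Fin N) :
    h y x + h z y + h x z = h z x + h y z + h x y := by
  have hNne : (N:ℝ) ≠ 0 := by positivity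
  have colsum : ∀ j : Fin N, ∑ i, PB G i j = 1 := by
    intro j
    calc ∑ i, PB G i j = ∑ i, PB G j i := by
          exact Finset.sum_congr rfl fun i _ => PB_symm G i j
      _ = 1 := PB_rowsum hN G hconn j
  -- Lemma A: (I - P) h_y = 1 - N e_y
  have hL : ∀ y u : Fin N, h y u - ∑ w, PB G u w * h y w
      = if u = y then 1 - (N:ℝ) else 1 := by
    intro y u
    by_cases hu : u = y
    · subst hu
      rw [if_pos rfl]
      have hsum : ∑ v, (h u v - ∑ w, PB G v w * h u w) = 0 := by
        rw [Finset.sum_sub_distrib, Finset.sum_comm]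
        simp_rw [← Finset.sum_mul, colsum, one_mul]
        exact sub_self _
      rw [← Finset.add_sum_erase _ _ (Finset.mem_univ u)] at hsum
      have herase : ∑ v ∈ Finset.univ.erase u, (h u v - ∑ w, PB G v w * h u w)
          = (N:ℝ) - 1 := by
        have : ∀ v ∈ Finset.univ.erase u, (h u v - ∑ w, PB G v w * h u w) = 1 := by
          intro v hv
          have hvne : v ≠ u := (Finset.mem_erase.mp hv).1
          rw [hrec u v hvne]; ring
        rw [Finset.sum_congr rfl this, Finset.sum_const, Finset.card_erase_of_mem
          (Finset.mem_univ u), Finset.card_univ, Fintype.card_fin, nsmul_eq_mul, mul_one]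
        have h1N : 1 ≤ N := le_trans (by norm_num) hN
        push_cast [Nat.cast_sub h1N]
        ring
      rw [herase] at hsum
      linarith
    · rw [if_neg hu, hrec y u hu]; ring
  -- Lemma B: N (h y z - h z y) = S y - S z
  have hB : ∀ y z : Fin N, (∑ u, h y u) - (N:ℝ) * h y z
      = (∑ u, h z u) - (N:ℝ) * h z y := by
    intro y z
    have expand : ∀ (g : Fin N → ℝ) (t : Fin N),
        ∑ u, g u * (if u = t then 1 - (N:ℝ) else 1) = (∑ u, g u) - (N:ℝ) * g t := by
      intro g t
      have hpt : ∀ u, g u * (if u = t then 1 - (N:ℝ) else 1)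
          = g u + (if u = t then -((N:ℝ)) * g t else 0) := by
        intro u
        by_cases hu : u = t
        · subst hu; rw [if_pos rfl, if_pos rfl]; ring
        · rw [if_neg hu, if_neg hu]; ring
      simp_rw [hpt]
      rw [Finset.sum_add_distrib, Finset.sum_ite_eq' Finset.univ t
        (fun _ => -((N:ℝ)) * g t), if_pos (Finset.mem_univ t)]
      ring
    have key : ∑ u, h y u * (h z u - ∑ w, PB G u w * h z w)
        = ∑ u, (h y u - ∑ w, PB G u w * h y w) * h z u := by
      have swap : ∑ u, ∑ w, PB G u w * h y w * h z u
          = ∑ u, ∑ w, h y u * (PB G u w * h z w) := by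
        rw [Finset.sum_comm]
        refine Finset.sum_congr rfl fun u _ => Finset.sum_congr rfl fun w _ => ?_
        rw [PB_symm G w u]
        ring
      simp_rw [mul_sub, sub_mul, Finset.mul_sum, Finset.sum_mul, Finset.sum_sub_distrib]
      rw [swap]
    simp_rw [hL] at key
    rw [expand (h y) z] at key
    have : ∑ u, (if u = y then 1 - (N:ℝ) else 1) * h z u
        = (∑ u, h z u) - (N:ℝ) * h z y := by
      rw [← expand (h z) y]
      exact Finset.sum_congr rfl fun u _ => by ring
    rw [this] at key
    exact key
  have e1 := hB y x
  have e2 := hB z y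
  have e3 := hB x z
  have hmul : (N:ℝ) * (h y x + h z y + h x z) = (N:ℝ) * (h z x + h y z + h x y) := by
    linarith
  exact mul_left_cancel₀ hNne hmul
end

section
/- (Claim 1 in the proof of Lemma 4) Let G be a connected simple graph on N ≥ 2 vertices with biased random walk matrix P^B. Any meeting-time solution m' for the modified paired process X' satisfies m'(x,y) < 2 · max_{u,v} h_v(u) for all vertices x, y, where (h_v) is a family of hitting-time solutions; that is, the meeting time of X' is less than twice the maximal hitting time of the biased random walk. -/
open Finset

section Aux

variable {N : ℕ} {G : SimpleGraph (Fin N)} [DecidableRel G.Adj]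

lemma deg_pos (hN : 2 ≤ N) (hconn : G.Connected) (x : Fin N) : 0 < G.degree x := by
  rw [SimpleGraph.degree_pos_iff_exists_adj]
  obtain ⟨y, hy⟩ := Fintype.exists_ne_of_one_lt_card (by rw [Fintype.card_fin]; omega) x
  obtain ⟨w⟩ := hconn.preconnected x y
  exact ⟨w.getVert 1, w.adj_snd (SimpleGraph.Walk.not_nil_of_ne (Ne.symm hy))⟩

lemma PB_symm_s9 (x z : Fin N) : PB G x z = PB G z x := by
  unfold PB
  by_cases hxz : x = z
  · subst hxz; simp
  · rw [if_neg hxz, if_neg (Ne.symm hxz)]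
    by_cases ha : G.Adj x z
    · rw [if_pos ha, if_pos ha.symm]; ring
    · rw [if_neg ha, if_neg fun hc => ha hc.symm]

lemma PB_pos_of_adj (hN : 2 ≤ N) (hconn : G.Connected) {x z : Fin N} (ha : G.Adj x z) :
    0 < PB G x z := by
  have hx := deg_pos hN hconn x
  have hz := deg_pos hN hconn z
  have hNR : (0:ℝ) < N := by
    have : 0 < N := by omega
    exact_mod_cast this
  have hxR : (0:ℝ) < G.degree x := by exact_mod_cast hx
  have hzR : (0:ℝ) < G.degree z := by exact_mod_cast hz
  have hne : x ≠ z := G.ne_of_adj ha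
  unfold PB
  rw [if_neg hne, if_pos ha]
  positivity

lemma PB_eq_zero {x z : Fin N} (hne : x ≠ z) (hnadj : ¬ G.Adj x z) : PB G x z = 0 := by
  unfold PB
  rw [if_neg hne, if_neg hnadj]

lemma PB_nonneg (hN : 2 ≤ N) (hconn : G.Connected) (x z : Fin N) : 0 ≤ PB G x z := by
  have hNR : (0:ℝ) < N := by
    have : 0 < N := by omega
    exact_mod_cast this
  by_cases hxz : x = z
  · subst hxz
    unfold PB
    rw [if_pos rfl]
    have hb : ∑ k ∈ G.neighborFinset x, 1 / ((N : ℝ) * (G.degree k : ℝ))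
        ≤ ∑ _k ∈ G.neighborFinset x, 1 / (N:ℝ) := by
      apply Finset.sum_le_sum
      intro k _
      have hk := deg_pos hN hconn k
      have hkR : (1:ℝ) ≤ (G.degree k : ℝ) := by exact_mod_cast hk
      rw [div_le_div_iff₀ (by positivity) hNR]
      nlinarith
    have hcard : ∑ _k ∈ G.neighborFinset x, 1 / (N:ℝ)
        = (G.degree x : ℝ) * (1 / (N:ℝ)) := by
      rw [Finset.sum_const, SimpleGraph.card_neighborFinset_eq_degree, nsmul_eq_mul]
    have hdeg : (G.degree x : ℝ) ≤ (N:ℝ) - 1 := by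
      have := G.degree_lt_card_verts x
      have : G.degree x ≤ N - 1 := by
        have hc : Fintype.card (Fin N) = N := Fintype.card_fin N
        omega
      have h2 : ((G.degree x : ℕ) : ℝ) ≤ ((N - 1 : ℕ) : ℝ) := by exact_mod_cast this
      calc (G.degree x : ℝ) ≤ ((N - 1 : ℕ) : ℝ) := h2
        _ = (N:ℝ) - 1 := by
            have : (1:ℕ) ≤ N := by omega
            push_cast [Nat.cast_sub this]
            ring
    have : ∑ k ∈ G.neighborFinset x, 1 / ((N : ℝ) * (G.degree k : ℝ))
        ≤ ((N:ℝ) - 1) * (1 / (N:ℝ)) := by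
      calc _ ≤ (G.degree x : ℝ) * (1 / (N:ℝ)) := hb.trans_eq hcard
        _ ≤ _ := by
            apply mul_le_mul_of_nonneg_right hdeg
            positivity
    have hNinv : ((N:ℝ) - 1) * (1 / (N:ℝ)) = 1 - 1/(N:ℝ) := by field_simp
    linarith [this.trans_eq hNinv]
  · by_cases ha : G.Adj x z
    · exact le_of_lt (PB_pos_of_adj hN hconn ha)
    · rw [PB_eq_zero hxz ha]

lemma sum_split (hconn : G.Connected) (x : Fin N) (f : Fin N → ℝ) :
    ∑ z, PB G x z * f z
      = PB G x x * f x + ∑ i ∈ G.neighborFinset x, PB G x i * f i := by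
  have hxn : x ∉ G.neighborFinset x := by
    simp [SimpleGraph.mem_neighborFinset]
  rw [show PB G x x * f x + ∑ i ∈ G.neighborFinset x, PB G x i * f i
      = ∑ z ∈ insert x (G.neighborFinset x), PB G x z * f z from (Finset.sum_insert (f := fun z => PB G x z * f z) hxn).symm]
  apply (Finset.sum_subset (Finset.subset_univ _) _).symm
  intro z _ hz
  have hzx : x ≠ z := by
    intro hc; exact hz (by rw [hc]; exact Finset.mem_insert_self _ _)
  have hnadj : ¬ G.Adj x z := by
    intro hc
    exact hz (Finset.mem_insert_of_mem (by simpa [SimpleGraph.mem_neighborFinset] using hc))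
  rw [PB_eq_zero hzx hnadj, zero_mul]

lemma row_sum (hN : 2 ≤ N) (hconn : G.Connected) (x : Fin N) : ∑ z, PB G x z = 1 := by
  have hNR : (0:ℝ) < N := by
    have : 0 < N := by omega
    exact_mod_cast this
  have hdx : (0:ℝ) < (G.degree x : ℝ) := by exact_mod_cast deg_pos hN hconn x
  have h1 : ∑ z, PB G x z = PB G x x + ∑ i ∈ G.neighborFinset x, PB G x i := by
    have := sum_split (G := G) hconn x (fun _ => 1)
    simpa using this
  have h2 : ∑ i ∈ G.neighborFinset x, PB G x i
      = 1/(N:ℝ) + ∑ k ∈ G.neighborFinset x, 1 / ((N : ℝ) * (G.degree k : ℝ)) := by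
    have hterm : ∀ i ∈ G.neighborFinset x,
        PB G x i = (1/(N:ℝ)) * (1/(G.degree x : ℝ)) + 1 / ((N : ℝ) * (G.degree i : ℝ)) := by
      intro i hi
      have hadj : G.Adj x i := by simpa [SimpleGraph.mem_neighborFinset] using hi
      have hne : x ≠ i := G.ne_of_adj hadj
      have hdi : (0:ℝ) < (G.degree i : ℝ) := by exact_mod_cast deg_pos hN hconn i
      unfold PB
      rw [if_neg hne, if_pos hadj]
      field_simp
    rw [Finset.sum_congr rfl hterm, Finset.sum_add_distrib, Finset.sum_const,
      SimpleGraph.card_neighborFinset_eq_degree, nsmul_eq_mul]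
    congr 1
    field_simp
  have hdiag : PB G x x
      = 1 - 1 / (N : ℝ) - ∑ k ∈ G.neighborFinset x, 1 / ((N : ℝ) * (G.degree k : ℝ)) := by
    unfold PB
    rw [if_pos rfl]
  rw [h1, h2, hdiag]
  ring

lemma col_sum (hN : 2 ≤ N) (hconn : G.Connected) (w : Fin N) : ∑ z, PB G z w = 1 := by
  calc ∑ z, PB G z w = ∑ z, PB G w z := by
        apply Finset.sum_congr rfl
        intro z _
        exact PB_symm_s9 z w
    _ = 1 := row_sum hN hconn w

end Aux

section HxAux

variable {N : ℕ} {G : SimpleGraph (Fin N)} [DecidableRel G.Adj]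
variable {h : Fin N → Fin N → ℝ}

lemma h_nonneg (hN : 2 ≤ N) (hconn : G.Connected)
    (h0 : ∀ v, h v v = 0)
    (hrec : ∀ v x, x ≠ v → h v x = 1 + ∑ z, PB G x z * h v z)
    (v x : Fin N) : 0 ≤ h v x := by
  obtain ⟨x₀, _, hmin⟩ := Finset.exists_min_image Finset.univ (h v) ⟨v, Finset.mem_univ v⟩
  rcases eq_or_ne x₀ v with rfl | hne
  · have := hmin x (Finset.mem_univ x)
    rw [h0 x₀] at this
    exact this
  · exfalso
    have he := hrec v x₀ hne
    have hlow : ∑ z, PB G x₀ z * h v x₀ ≤ ∑ z, PB G x₀ z * h v z := by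
      apply Finset.sum_le_sum
      intro z _
      exact mul_le_mul_of_nonneg_left (hmin z (Finset.mem_univ z)) (PB_nonneg hN hconn x₀ z)
    have hsum : ∑ z, PB G x₀ z * h v x₀ = h v x₀ := by
      rw [← Finset.sum_mul, row_sum hN hconn, one_mul]
    have := hmin x₀ (Finset.mem_univ x₀)
    linarith

lemma h_ge_one (hN : 2 ≤ N) (hconn : G.Connected)
    (h0 : ∀ v, h v v = 0)
    (hrec : ∀ v x, x ≠ v → h v x = 1 + ∑ z, PB G x z * h v z)
    {v x : Fin N} (hne : x ≠ v) : 1 ≤ h v x := by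
  rw [hrec v x hne]
  have : (0:ℝ) ≤ ∑ z, PB G x z * h v z := by
    apply Finset.sum_nonneg
    intro z _
    exact mul_nonneg (PB_nonneg hN hconn x z) (h_nonneg hN hconn h0 hrec v z)
  linarith

/-- Return-time identity: `∑_z P x z · h x z = N - 1`. -/
lemma h_return (hN : 2 ≤ N) (hconn : G.Connected)
    (h0 : ∀ v, h v v = 0)
    (hrec : ∀ v x, x ≠ v → h v x = 1 + ∑ z, PB G x z * h v z)
    (x : Fin N) : ∑ z, PB G x z * h x z = (N:ℝ) - 1 := by
  have hx0 : h x x = 0 := h0 x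
  have key : ∑ z ∈ Finset.univ.erase x, h x z = ∑ z, h x z :=
    Finset.sum_erase Finset.univ hx0
  have expand : ∑ z ∈ Finset.univ.erase x, h x z
      = ∑ z ∈ Finset.univ.erase x, (1 + ∑ w, PB G z w * h x w) := by
    apply Finset.sum_congr rfl
    intro z hz
    exact hrec x z (Finset.ne_of_mem_erase hz)
  have hcard : (Finset.univ.erase x).card = N - 1 := by
    rw [Finset.card_erase_of_mem (Finset.mem_univ x), Finset.card_univ, Fintype.card_fin]
  have swap : ∑ z ∈ Finset.univ.erase x, ∑ w, PB G z w * h x w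
      = ∑ w, (1 - PB G x w) * h x w := by
    rw [Finset.sum_comm]
    apply Finset.sum_congr rfl
    intro w _
    rw [← Finset.sum_mul]
    congr 1
    rw [Finset.sum_erase_eq_sub (Finset.mem_univ x), col_sum hN hconn]
  have hNcast : ((N - 1 : ℕ) : ℝ) = (N:ℝ) - 1 := by
    have h1 : (1:ℕ) ≤ N := by omega
    push_cast [Nat.cast_sub h1]
    ring
  have expand2 : ∑ z ∈ Finset.univ.erase x, (1 + ∑ w, PB G z w * h x w)
      = ((N:ℝ) - 1) + ∑ w, (1 - PB G x w) * h x w := by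
    rw [Finset.sum_add_distrib, Finset.sum_const, hcard, nsmul_eq_mul, mul_one, hNcast, swap]
  have expand3 : ∑ w, (1 - PB G x w) * h x w
      = (∑ w, h x w) - ∑ w, PB G x w * h x w := by
    rw [← Finset.sum_sub_distrib]
    apply Finset.sum_congr rfl
    intro w _
    ring
  have := key
  rw [expand, expand2, expand3] at this
  linarith

end HxAux

section Harm

variable {N : ℕ} {G : SimpleGraph (Fin N)} [DecidableRel G.Adj]

lemma harm_const (hN : 2 ≤ N) (hconn : G.Connected)
    (f : Fin N → ℝ) (hf : ∀ y, f y = ∑ w, PB G y w * f w) (y y' : Fin N) :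
    f y = f y' := by
  have hNpos : 0 < N := by omega
  obtain ⟨a, _, hmax⟩ := Finset.exists_max_image Finset.univ f ⟨⟨0, hNpos⟩, Finset.mem_univ _⟩
  have step : ∀ u, f u = f a → ∀ w, G.Adj u w → f w = f a := by
    intro u hu w hadj
    have hzero : ∑ z, PB G u z * (f a - f z) = 0 := by
      have : ∑ z, PB G u z * (f a - f z)
          = (∑ z, PB G u z) * f a - ∑ z, PB G u z * f z := by
        rw [Finset.sum_mul, ← Finset.sum_sub_distrib]
        apply Finset.sum_congr rfl
        intro z _
        ring
      rw [this, row_sum hN hconn, one_mul, ← hf u, hu]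
      ring
    have hterms : ∀ z ∈ Finset.univ, 0 ≤ PB G u z * (f a - f z) := by
      intro z _
      exact mul_nonneg (PB_nonneg hN hconn u z)
        (by linarith [hmax z (Finset.mem_univ z)])
    have hall := (Finset.sum_eq_zero_iff_of_nonneg hterms).mp hzero
    have hw := hall w (Finset.mem_univ w)
    have hPpos := PB_pos_of_adj hN hconn hadj
    have : f a - f w = 0 := by
      by_contra hc
      exact hc (by
        have := mul_eq_zero.mp hw
        rcases this with h1 | h2
        · exact absurd h1 (ne_of_gt hPpos)
        · exact h2)
    linarith
  have main : ∀ (u z : Fin N), G.Walk u z → f u = f a → f z = f a := by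
    intro u z p
    induction p with
    | nil => exact id
    | cons hadj _ ih => intro hu; exact ih (step _ hu _ hadj)
  obtain ⟨p⟩ := hconn.preconnected a y
  obtain ⟨p'⟩ := hconn.preconnected a y'
  rw [main a y p rfl, main a y' p' rfl]

end Harm

section KeyId

variable {N : ℕ} {G : SimpleGraph (Fin N)} [DecidableRel G.Adj]
variable {h : Fin N → Fin N → ℝ}

/-- Uniform one-step identity: `∑_w P y w · h z w = h z y - 1 + N·[y = z]`. -/
lemma step_id (hN : 2 ≤ N) (hconn : G.Connected)
    (h0 : ∀ v, h v v = 0)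
    (hrec : ∀ v x, x ≠ v → h v x = 1 + ∑ z, PB G x z * h v z)
    (z y : Fin N) :
    ∑ w, PB G y w * h z w = h z y - 1 + (if y = z then (N:ℝ) else 0) := by
  by_cases hyz : y = z
  · subst hyz
    rw [if_pos rfl, h_return hN hconn h0 hrec, h0]
    ring
  · rw [if_neg hyz]
    have := hrec z y hyz
    linarith

/-- Key identity: `∑_z P x z · h z y = h x y + A x - N + N·[y = x]`,
where `A x = ∑_z P x z · h z x`. -/
lemma key_id (hN : 2 ≤ N) (hconn : G.Connected)
    (h0 : ∀ v, h v v = 0)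
    (hrec : ∀ v x, x ≠ v → h v x = 1 + ∑ z, PB G x z * h v z)
    (x y : Fin N) :
    ∑ z, PB G x z * h z y
      = h x y + (∑ z, PB G x z * h z x) - (N:ℝ) + (if y = x then (N:ℝ) else 0) := by
  set q : Fin N → ℝ :=
    fun y => (∑ z, PB G x z * h z y) - h x y - (if y = x then (N:ℝ) else 0) with hq
  have qharm : ∀ y, q y = ∑ w, PB G y w * q w := by
    intro y
    have expand : ∑ w, PB G y w * q w
        = (∑ w, PB G y w * ∑ z, PB G x z * h z w)
          - (∑ w, PB G y w * h x w) - (N:ℝ) * PB G y x := by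
      simp only [hq]
      rw [show (N:ℝ) * PB G y x
            = ∑ w, PB G y w * (if w = x then (N:ℝ) else 0) by
          rw [Finset.sum_congr rfl (fun w _ => by rw [mul_ite, mul_zero]),
            Finset.sum_ite_eq' Finset.univ x (fun w => PB G y w * (N:ℝ))]
          simp [mul_comm]]
      rw [← Finset.sum_sub_distrib, ← Finset.sum_sub_distrib]
      apply Finset.sum_congr rfl
      intro w _
      ring
    have swap : ∑ w, PB G y w * ∑ z, PB G x z * h z w
        = ∑ z, PB G x z * ∑ w, PB G y w * h z w := by
      calc ∑ w, PB G y w * ∑ z, PB G x z * h z w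
          = ∑ w, ∑ z, PB G x z * (PB G y w * h z w) := by
            apply Finset.sum_congr rfl; intro w _
            rw [Finset.mul_sum]; apply Finset.sum_congr rfl; intro z _; ring
        _ = ∑ z, ∑ w, PB G x z * (PB G y w * h z w) := Finset.sum_comm
        _ = ∑ z, PB G x z * ∑ w, PB G y w * h z w := by
            apply Finset.sum_congr rfl; intro z _
            rw [Finset.mul_sum]
    have inner : ∑ z, PB G x z * ∑ w, PB G y w * h z w
        = (∑ z, PB G x z * h z y) - 1 + (N:ℝ) * PB G x y := by
      have e : ∀ z ∈ Finset.univ, PB G x z * ∑ w, PB G y w * h z w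
          = PB G x z * h z y - PB G x z
            + (if y = z then PB G x z * (N:ℝ) else 0) := by
        intro z _
        rw [step_id hN hconn h0 hrec z y]
        by_cases hyz : y = z <;> simp [hyz] <;> ring
      rw [Finset.sum_congr rfl e, Finset.sum_add_distrib, Finset.sum_sub_distrib,
        Finset.sum_ite_eq Finset.univ y (fun z => PB G x z * (N:ℝ)),
        row_sum hN hconn]
      simp [mul_comm]
    have hstep_x : ∑ w, PB G y w * h x w
        = h x y - 1 + (if y = x then (N:ℝ) else 0) := step_id hN hconn h0 hrec x y
    rw [expand, swap, inner, hstep_x, PB_symm_s9 y x]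
    simp only [hq]
    ring
  have hconst := harm_const hN hconn q qharm y x
  have hqx : q x = (∑ z, PB G x z * h z x) - (N:ℝ) := by
    simp only [hq]
    rw [h0 x]
    simp
  have hqy : (∑ z, PB G x z * h z y) - h x y - (if y = x then (N:ℝ) else 0)
      = (∑ z, PB G x z * h z x) - (N:ℝ) := by
    rw [← hqx, ← hconst]
  linarith [hqy]


end KeyId

section Phi

variable {N : ℕ} {G : SimpleGraph (Fin N)} [DecidableRel G.Adj]
variable {h : Fin N → Fin N → ℝ}

lemma U_step (hN : 2 ≤ N) (hconn : G.Connected)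
    (h0 : ∀ v, h v v = 0)
    (hrec : ∀ v x, x ≠ v → h v x = 1 + ∑ z, PB G x z * h v z)
    (x : Fin N) :
    ∑ z, PB G x z * ((1/(N:ℝ)) * ∑ v, h z v)
      = (1/(N:ℝ)) * (∑ v, h x v) + (∑ z, PB G x z * h z x) - (N:ℝ) + 1 := by
  have hNR : (0:ℝ) < (N:ℝ) := by
    have : 0 < N := by omega
    exact_mod_cast this
  have swap : ∑ z, PB G x z * ∑ v, h z v = ∑ v, ∑ z, PB G x z * h z v := by
    calc ∑ z, PB G x z * ∑ v, h z v = ∑ z, ∑ v, PB G x z * h z v := by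
          apply Finset.sum_congr rfl; intro z _; rw [Finset.mul_sum]
      _ = ∑ v, ∑ z, PB G x z * h z v := Finset.sum_comm
  have e : ∀ v ∈ Finset.univ, ∑ z, PB G x z * h z v
      = (h x v + ((∑ z, PB G x z * h z x) - (N:ℝ)))
        + (if v = x then (N:ℝ) else 0) := by
    intro v _
    have := key_id hN hconn h0 hrec x v
    linarith
  have main : ∑ v, ∑ z, PB G x z * h z v
      = ((∑ v, h x v) + (N:ℝ)*((∑ z, PB G x z * h z x) - (N:ℝ))) + (N:ℝ) := by
    rw [Finset.sum_congr rfl e, Finset.sum_add_distrib,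
      Finset.sum_ite_eq' Finset.univ x fun _ => (N:ℝ), Finset.sum_add_distrib,
      Finset.sum_const, Finset.card_univ, Fintype.card_fin, nsmul_eq_mul]
    simp
  have pull : ∑ z, PB G x z * ((1/(N:ℝ)) * ∑ v, h z v)
      = (1/(N:ℝ)) * ∑ z, PB G x z * ∑ v, h z v := by
    rw [Finset.mul_sum]; apply Finset.sum_congr rfl; intro z _; ring
  rw [pull, swap, main]
  field_simp
  ring

lemma phi_step (hN : 2 ≤ N) (hconn : G.Connected)
    (h0 : ∀ v, h v v = 0)
    (hrec : ∀ v x, x ≠ v → h v x = 1 + ∑ z, PB G x z * h v z)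
    (K : ℝ) {a b : Fin N} (hab : a ≠ b) :
    ∑ z, PB G a z * ((h b z + h z b - (1/(N:ℝ)) * ∑ v, h z v
        - (1/(N:ℝ)) * ∑ v, h b v)/2 + K)
      = ((h b a + h a b - (1/(N:ℝ)) * ∑ v, h a v
        - (1/(N:ℝ)) * ∑ v, h b v)/2 + K) - 1 := by
  have S0 : ∑ z, PB G a z = 1 := row_sum hN hconn a
  have S1 : ∑ z, PB G a z * h b z = h b a - 1 := by
    have := hrec b a hab
    linarith
  have S2 : ∑ z, PB G a z * h z b = h a b + (∑ z, PB G a z * h z a) - (N:ℝ) := by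
    have := key_id hN hconn h0 hrec a b
    rw [if_neg (Ne.symm hab)] at this
    linarith
  have S3 := U_step hN hconn h0 hrec a
  have expand : ∀ z ∈ Finset.univ,
      PB G a z * ((h b z + h z b - (1/(N:ℝ)) * ∑ v, h z v
          - (1/(N:ℝ)) * ∑ v, h b v)/2 + K)
        = (PB G a z * h b z + PB G a z * h z b
            - PB G a z * ((1/(N:ℝ)) * ∑ v, h z v)
            - PB G a z * ((1/(N:ℝ)) * ∑ v, h b v)) / 2 + PB G a z * K := by
    intro z _
    ring
  rw [Finset.sum_congr rfl expand, Finset.sum_add_distrib, ← Finset.sum_div,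
    Finset.sum_sub_distrib, Finset.sum_sub_distrib, Finset.sum_add_distrib,
    ← Finset.sum_mul, ← Finset.sum_mul, S0, S1, S2, S3]
  ring

end Phi

/-- Claim 1 in the proof of Lemma 4: for a connected simple graph on
`N ≥ 2` vertices, any meeting-time solution `m'` for the modified paired process `X'`
satisfies `m' x y < 2 · max_{u,v} H(u,v)`, where `h` is a family of hitting-time
solutions of the biased random walk (`h v u = H(u, v)`). -/
theorem meeting_time_modified_lt_two_hitting {N : ℕ} (hN : 2 ≤ N)
    (G : SimpleGraph (Fin N)) [DecidableRel G.Adj] (hconn : G.Connected)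
    (h : Fin N → Fin N → ℝ) (h0 : ∀ v, h v v = 0)
    (hrec : ∀ v x, x ≠ v → h v x = 1 + ∑ z, PB G x z * h v z)
    (m' : Fin N → Fin N → ℝ)
    (hsym : ∀ x y, m' x y = m' y x) (hdiag : ∀ x, m' x x = 0)
    (hm : ∀ x y, x ≠ y →
      ((∑ i ∈ G.neighborFinset x, PB G x i) + (∑ j ∈ G.neighborFinset y, PB G y j))
          * m' x y
        = 1 + (∑ i ∈ G.neighborFinset x, PB G x i * m' i y)
            + (∑ j ∈ G.neighborFinset y, PB G y j * m' x j)) :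
    ∀ x y, m' x y <
      2 * Finset.univ.sup' ⟨(x, y), Finset.mem_univ _⟩
        (fun p : Fin N × Fin N => h p.2 p.1) := by
  intro x y
  have hNR : (0:ℝ) < (N:ℝ) := by
    have : 0 < N := by omega
    exact_mod_cast (by omega : 0 < N)
  set M := Finset.univ.sup' ⟨(x, y), Finset.mem_univ _⟩
    (fun p : Fin N × Fin N => h p.2 p.1) with hMdef
  have hMle : ∀ u v : Fin N, h v u ≤ M := by
    intro u v
    exact Finset.le_sup' (fun p : Fin N × Fin N => h p.2 p.1) (Finset.mem_univ (u, v))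
  have hM1 : 1 ≤ M := by
    have hne₀ : (⟨0, by omega⟩ : Fin N) ≠ (⟨1, by omega⟩ : Fin N) := by
      simp [Fin.ext_iff]
    exact le_trans (h_ge_one hN hconn h0 hrec hne₀) (hMle _ _)
  -- the averaged hitting potential U
  set U : Fin N → ℝ := fun a => (1/(N:ℝ)) * ∑ v, h a v with hUdef
  have hNpos : 0 < N := by omega
  obtain ⟨w₀, _, hKmax⟩ := Finset.exists_max_image Finset.univ U
    ⟨⟨0, hNpos⟩, Finset.mem_univ _⟩
  set K := U w₀ with hKdef
  have hKU : ∀ u, U u ≤ K := fun u => hKmax u (Finset.mem_univ u)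
  -- strict bound K - U u < M
  have hKlt : ∀ u : Fin N, K - U u < M := by
    intro u
    rcases eq_or_ne w₀ u with rfl | hne
    · simpa [hKdef] using lt_of_lt_of_le zero_lt_one hM1
    · have hpt : ∀ v ∈ Finset.univ,
          h w₀ v - h u v ≤ M + (if v = w₀ then (-1 - M) else 0) := by
        intro v _
        by_cases hv : v = w₀
        · subst hv
          rw [if_pos rfl]
          have h1 : 1 ≤ h u v := h_ge_one hN hconn h0 hrec hne
          have h2 : h v v = 0 := h0 v
          linarith
        · rw [if_neg hv]
          have h1 : h w₀ v ≤ M := hMle v w₀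
          have h2 : 0 ≤ h u v := h_nonneg hN hconn h0 hrec u v
          linarith
      have hb : ∑ v, (h w₀ v - h u v) ≤ ((N:ℝ) - 1) * M - 1 := by
        calc ∑ v, (h w₀ v - h u v)
            ≤ ∑ v, (M + (if v = w₀ then (-1 - M) else 0)) :=
              Finset.sum_le_sum hpt
          _ = (N:ℝ) * M + (-1 - M) := by
              rw [Finset.sum_add_distrib, Finset.sum_const, Finset.card_univ,
                Fintype.card_fin, nsmul_eq_mul,
                Finset.sum_ite_eq' Finset.univ w₀ (fun _ => (-1 - M))]
              simp
          _ = ((N:ℝ) - 1) * M - 1 := by ring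
      have hKU' : K - U u = (1/(N:ℝ)) * ∑ v, (h w₀ v - h u v) := by
        rw [Finset.sum_sub_distrib]
        simp only [hKdef, hUdef]
        ring
      rw [hKU']
      have hmul : (1/(N:ℝ)) * ∑ v, (h w₀ v - h u v)
          ≤ (1/(N:ℝ)) * (((N:ℝ) - 1) * M - 1) :=
        mul_le_mul_of_nonneg_left hb (by positivity)
      have hlt : (1/(N:ℝ)) * (((N:ℝ) - 1) * M - 1) < M := by
        rw [show (1/(N:ℝ)) * (((N:ℝ) - 1) * M - 1) = (((N:ℝ) - 1) * M - 1) / N by ring,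
          div_lt_iff₀ hNR]
        nlinarith
      linarith
  -- the supersolution Φ
  set Φ : Fin N → Fin N → ℝ :=
    fun a b => (h b a + h a b - U a - U b)/2 + K with hΦdef
  have hΦsymm : ∀ a b, Φ a b = Φ b a := by
    intro a b
    simp only [hΦdef]
    ring
  have hΦstep : ∀ a b : Fin N, a ≠ b → ∑ z, PB G a z * Φ z b = Φ a b - 1 := by
    intro a b hab
    simpa only [hΦdef, hUdef] using phi_step hN hconn h0 hrec K hab
  -- neighbor-sum versions
  have nsum : ∀ (a : Fin N) (f : Fin N → ℝ),
      ∑ i ∈ G.neighborFinset a, PB G a i * f i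
        = (∑ z, PB G a z * f z) - PB G a a * f a := by
    intro a f
    have := sum_split (G := G) hconn a f
    linarith
  have Ssum : ∀ a : Fin N,
      ∑ i ∈ G.neighborFinset a, PB G a i = 1 - PB G a a := by
    intro a
    have := nsum a (fun _ => 1)
    simpa [row_sum hN hconn a] using this
  -- maximum principle
  obtain ⟨p₀, _, hd⟩ := Finset.exists_max_image Finset.univ
    (fun p : Fin N × Fin N => m' p.1 p.2 - Φ p.1 p.2) ⟨(x, y), Finset.mem_univ _⟩
  obtain ⟨a, b⟩ := p₀
  have hDa : ∀ u v : Fin N, m' u v - Φ u v ≤ m' a b - Φ a b := by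
    intro u v
    exact hd (u, v) (Finset.mem_univ (u, v))
  have hD0 : m' a b - Φ a b ≤ 0 := by
    rcases eq_or_ne a b with rfl | hne
    · have hΦaa : Φ a a = K - U a := by
        simp only [hΦdef]
        rw [h0 a]
        ring
      rw [hdiag a, hΦaa]
      have := hKU a
      linarith
    · exfalso
      have hm' := hm a b hne
      have hEa : ∑ i ∈ G.neighborFinset a, PB G a i * Φ i b
          = (Φ a b - 1) - PB G a a * Φ a b := by
        rw [nsum a (fun i => Φ i b), hΦstep a b hne]
      have hEb : ∑ j ∈ G.neighborFinset b, PB G b j * Φ a j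
          = (Φ a b - 1) - PB G b b * Φ a b := by
        have : ∑ z, PB G b z * Φ a z = Φ a b - 1 := by
          calc ∑ z, PB G b z * Φ a z = ∑ z, PB G b z * Φ z a := by
                apply Finset.sum_congr rfl
                intro z _
                rw [hΦsymm a z]
            _ = Φ b a - 1 := hΦstep b a hne.symm
            _ = Φ a b - 1 := by rw [hΦsymm b a]
        rw [nsum b (fun j => Φ a j), this, hΦsymm a b, ← hΦsymm a b]
      -- bound the m'-sums by the max
      have hba : ∑ i ∈ G.neighborFinset a, PB G a i * m' i b
          ≤ (∑ i ∈ G.neighborFinset a, PB G a i * Φ i b)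
            + (∑ i ∈ G.neighborFinset a, PB G a i) * (m' a b - Φ a b) := by
        rw [Finset.sum_mul, ← Finset.sum_add_distrib]
        apply Finset.sum_le_sum
        intro i hi
        have hP := PB_nonneg hN hconn a i
        have := mul_le_mul_of_nonneg_left (hDa i b) hP
        rw [mul_sub] at this
        linarith
      have hbb : ∑ j ∈ G.neighborFinset b, PB G b j * m' a j
          ≤ (∑ j ∈ G.neighborFinset b, PB G b j * Φ a j)
            + (∑ j ∈ G.neighborFinset b, PB G b j) * (m' a b - Φ a b) := by
        rw [Finset.sum_mul, ← Finset.sum_add_distrib]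
        apply Finset.sum_le_sum
        intro j hj
        have hP := PB_nonneg hN hconn b j
        have := mul_le_mul_of_nonneg_left (hDa a j) hP
        rw [mul_sub] at this
        linarith
      set Sa := ∑ i ∈ G.neighborFinset a, PB G a i with hSa
      set Sb := ∑ j ∈ G.neighborFinset b, PB G b j with hSb
      have hEtot : (Sa + Sb) * Φ a b
          = 2 + (∑ i ∈ G.neighborFinset a, PB G a i * Φ i b)
            + (∑ j ∈ G.neighborFinset b, PB G b j * Φ a j) := by
        rw [hEa, hEb, hSa, hSb, Ssum a, Ssum b]
        ring
      have hring : (Sa + Sb) * m' a b - (Sa + Sb) * Φ a b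
          = Sa * (m' a b - Φ a b) + Sb * (m' a b - Φ a b) := by
        ring
      linarith
  have hfin : m' x y ≤ Φ x y := by
    have := hDa x y
    linarith
  have hΦlt : Φ x y < 2 * M := by
    have h1 : h y x ≤ M := hMle x y
    have h2 : h x y ≤ M := hMle y x
    have h3 := hKlt x
    have h4 := hKlt y
    simp only [hΦdef]
    linarith
  linarith
end

section
/- (Lemma 4) Let G be a connected simple graph on N ≥ 2 vertices with biased random walk matrix P^B, and let (h_v) be a family of hitting-time solutions. Then any meeting-time solution m for the paired process X satisfies m(x,y) < 4 · max_{u,v} h_v(u) for all vertices x, y; that is, the meeting time of two walkers following the paired process X is less than 4 times the maximal hitting time H(G) of the biased random walk. -/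
namespace MeetAux

variable {N : ℕ} (G : SimpleGraph (Fin N)) [DecidableRel G.Adj]

lemma PB_symm (i j : Fin N) : PB G i j = PB G j i := by
  unfold PB
  by_cases hij : i = j
  · subst hij; rfl
  · have hji : ¬ j = i := fun e => hij e.symm
    rw [if_neg hij, if_neg hji]
    by_cases ha : G.Adj i j
    · rw [if_pos ha, if_pos ha.symm]; ring
    · rw [if_neg ha, if_neg (fun hb => ha hb.symm)]

lemma PB_zero {i j : Fin N} (hij : i ≠ j) (hadj : ¬ G.Adj i j) : PB G i j = 0 := by
  unfold PB; rw [if_neg hij, if_neg hadj]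

lemma degree_pos (hN : 2 ≤ N) (hconn : G.Connected) (v : Fin N) : 0 < G.degree v := by
  rw [G.degree_pos_iff_exists_adj]
  obtain ⟨u, hu⟩ := Fintype.exists_ne_of_one_lt_card (by simp; omega) v
  obtain ⟨p⟩ := hconn.preconnected v u
  cases p with
  | nil => exact absurd rfl hu
  | cons hadj _ => exact ⟨_, hadj⟩

lemma PB_nonneg (hN : 2 ≤ N) (hconn : G.Connected) (i j : Fin N) : 0 ≤ PB G i j := by
  have hN0 : (0:ℝ) < N := by positivity
  have hd := degree_pos G hN hconn
  unfold PB
  by_cases hij : i = j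
  · rw [if_pos hij]
    have hT : ∑ k ∈ G.neighborFinset i, 1 / ((N : ℝ) * (G.degree k : ℝ))
        ≤ (G.degree i : ℝ) * (1 / N) := by
      have := Finset.sum_le_card_nsmul (G.neighborFinset i)
          (fun k => 1 / ((N : ℝ) * (G.degree k : ℝ))) (1 / N) ?_
      · simpa [SimpleGraph.card_neighborFinset_eq_degree, nsmul_eq_mul] using this
      · intro k _
        have hk : (1:ℝ) ≤ (G.degree k : ℝ) := by exact_mod_cast hd k
        have h1 : (N:ℝ) ≤ (N:ℝ) * (G.degree k : ℝ) := by nlinarith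
        exact one_div_le_one_div_of_le hN0 h1
    have hdeg : (G.degree i : ℝ) ≤ (N:ℝ) - 1 := by
      have := G.degree_lt_card_verts i
      rw [Fintype.card_fin] at this
      have : G.degree i + 1 ≤ N := this
      have := (Nat.cast_le (α := ℝ)).2 this
      push_cast at this; linarith
    have hfld : ((N:ℝ) - 1) * (1 / N) = 1 - 1 / N := by field_simp
    nlinarith [hT, hdeg, mul_le_mul_of_nonneg_right hdeg (by positivity : (0:ℝ) ≤ 1 / N)]
  · rw [if_neg hij]
    by_cases ha : G.Adj i j
    · rw [if_pos ha]; positivity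
    · rw [if_neg ha]

lemma row_sum (hN : 2 ≤ N) (hconn : G.Connected) (a : Fin N) :
    ∑ j, PB G a j = 1 := by
  have hN0 : (0:ℝ) < N := by positivity
  have hd := degree_pos G hN hconn
  have hsplit : ∑ j, PB G a j = PB G a a + ∑ j ∈ Finset.univ.erase a, PB G a j :=
    (Finset.add_sum_erase _ _ (Finset.mem_univ a)).symm
  have herase : ∑ j ∈ Finset.univ.erase a, PB G a j
      = ∑ j ∈ G.neighborFinset a, PB G a j := by
    refine (Finset.sum_subset ?_ ?_).symm
    · intro i hi
      rw [SimpleGraph.mem_neighborFinset] at hi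
      exact Finset.mem_erase.2 ⟨hi.ne', Finset.mem_univ _⟩
    · intro i hi hni
      rw [SimpleGraph.mem_neighborFinset] at hni
      exact PB_zero G (Finset.ne_of_mem_erase hi).symm hni
  have hnbr : ∑ j ∈ G.neighborFinset a, PB G a j
      = 1 / (N:ℝ) + ∑ k ∈ G.neighborFinset a, 1 / ((N : ℝ) * (G.degree k : ℝ)) := by
    have hterm : ∀ j ∈ G.neighborFinset a,
        PB G a j = 1 / ((N:ℝ) * (G.degree a : ℝ)) + 1 / ((N : ℝ) * (G.degree j : ℝ)) := by
      intro j hj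
      rw [SimpleGraph.mem_neighborFinset] at hj
      unfold PB
      rw [if_neg hj.ne, if_pos hj]
      have h1 : (G.degree a : ℝ) ≠ 0 := by
        have := hd a; positivity
      have h2 : (G.degree j : ℝ) ≠ 0 := by
        have := hd j; positivity
      field_simp
    rw [Finset.sum_congr rfl hterm, Finset.sum_add_distrib, Finset.sum_const,
      SimpleGraph.card_neighborFinset_eq_degree, nsmul_eq_mul]
    have h1 : (G.degree a : ℝ) ≠ 0 := by have := hd a; positivity
    have : (G.degree a : ℝ) * (1 / ((N:ℝ) * (G.degree a : ℝ))) = 1 / (N:ℝ) := by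
      field_simp
    rw [this]
  have hdiag : PB G a a
      = 1 - 1 / (N : ℝ) - ∑ k ∈ G.neighborFinset a, 1 / ((N : ℝ) * (G.degree k : ℝ)) := by
    unfold PB; rw [if_pos rfl]
  rw [hsplit, herase, hnbr, hdiag]; ring

end MeetAux

/-- Lemma 4: for a connected simple graph on `N ≥ 2` vertices with a
family `h` of hitting-time solutions of the biased random walk (`h v u = H(u, v)`),
any meeting-time solution `m` for the paired process `X` satisfies
`m x y < 4 · max_{u,v} H(u,v)`, i.e. the meeting time of two walkers following the
paired process is less than `4` times the maximal hitting time `H(G)`. -/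
theorem meeting_time_lt_four_hitting {N : ℕ} (hN : 2 ≤ N)
    (G : SimpleGraph (Fin N)) [DecidableRel G.Adj] (hconn : G.Connected)
    (h : Fin N → Fin N → ℝ) (h0 : ∀ v, h v v = 0)
    (hrec : ∀ v x, x ≠ v → h v x = 1 + ∑ z, PB G x z * h v z)
    (m : Fin N → Fin N → ℝ)
    (hsym : ∀ x y, m x y = m y x) (hdiag : ∀ x, m x x = 0)
    (hm : ∀ x y, x ≠ y →
      ((∑ i ∈ G.neighborFinset x, PB G x i) + (∑ j ∈ G.neighborFinset y, PB G y j)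
          - PB G x y) * m x y
        = 1 + (∑ i ∈ (G.neighborFinset x).erase y, PB G x i * m i y)
            + (∑ j ∈ (G.neighborFinset y).erase x, PB G y j * m x j)) :
    ∀ x y, m x y <
      4 * Finset.univ.sup' ⟨(x, y), Finset.mem_univ _⟩
        (fun p : Fin N × Fin N => h p.2 p.1) := by
  intro x y
  have hN0 : (0:ℝ) < N := by positivity
  have hNne : (N:ℝ) ≠ 0 := ne_of_gt hN0
  have hPBnn : ∀ i j, 0 ≤ PB G i j := MeetAux.PB_nonneg G hN hconn
  have hrow : ∀ a, ∑ j, PB G a j = 1 := MeetAux.row_sum G hN hconn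
  have hcol : ∀ z, ∑ a, PB G a z = 1 := by
    intro z
    rw [Finset.sum_congr rfl fun a _ => MeetAux.PB_symm G a z]
    exact hrow z
  -- the rearranged hitting-time equation
  have hstep : ∀ v q, q ≠ v → ∑ z, PB G q z * h v z = h v q - 1 := by
    intro v q hqv
    have := hrec v q hqv; linarith
  -- return-time identity
  have hret : ∀ v, ∑ z, PB G v z * h v z = (N:ℝ) - 1 := by
    intro v
    have hA : ∑ q, ∑ z, PB G q z * h v z = ∑ q, h v q := by
      rw [Finset.sum_comm]
      refine Finset.sum_congr rfl fun z _ => ?_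
      rw [← Finset.sum_mul, hcol z, one_mul]
    have hsum0 : ∑ q, (h v q - ∑ z, PB G q z * h v z) = 0 := by
      rw [Finset.sum_sub_distrib, hA, sub_self]
    have hsplit : (h v v - ∑ z, PB G v z * h v z)
        + ∑ q ∈ Finset.univ.erase v, (h v q - ∑ z, PB G q z * h v z)
        = ∑ q, (h v q - ∑ z, PB G q z * h v z) := by
      exact Finset.add_sum_erase Finset.univ
        (fun q => h v q - ∑ z, PB G q z * h v z) (Finset.mem_univ v)
    have hones : ∑ q ∈ Finset.univ.erase v, (h v q - ∑ z, PB G q z * h v z)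
        = (N:ℝ) - 1 := by
      have hterm : ∀ q ∈ Finset.univ.erase v,
          (h v q - ∑ z, PB G q z * h v z) = 1 := by
        intro q hq
        have := hstep v q (Finset.ne_of_mem_erase hq); linarith
      rw [Finset.sum_congr rfl hterm, Finset.sum_const, nsmul_eq_mul, mul_one,
        Finset.card_erase_of_mem (Finset.mem_univ v), Finset.card_univ, Fintype.card_fin]
      have : (1:ℕ) ≤ N := by omega
      push_cast [Nat.cast_sub this]
      ring
    have h00 := h0 v
    rw [hones, hsum0] at hsplit
    linarith
  -- combined equation
  have hE : ∀ v q, ∑ z, PB G q z * h v z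
      = h v q - 1 + (if q = v then (N:ℝ) else 0) := by
    intro v q
    by_cases hqv : q = v
    · subst hqv
      rw [if_pos rfl, hret q, h0 q]; ring
    · rw [if_neg hqv, hstep v q hqv]; ring
  -- nonnegativity of h
  have hnn : ∀ v u, 0 ≤ h v u := by
    obtain ⟨q, _, hq⟩ := Finset.exists_min_image Finset.univ
      (fun p : Fin N × Fin N => h p.1 p.2) ⟨(x, y), Finset.mem_univ _⟩
    have hq' : ∀ v u, h q.1 q.2 ≤ h v u := fun v u => hq (v, u) (Finset.mem_univ _)
    have h0q : 0 ≤ h q.1 q.2 := by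
      by_contra hcon
      push_neg at hcon
      have hne : q.2 ≠ q.1 := by
        intro he
        rw [he, h0] at hcon; linarith
      have hlow : ∑ z, PB G q.2 z * h q.1 z ≥ ∑ z, PB G q.2 z * h q.1 q.2 := by
        refine Finset.sum_le_sum fun z _ => ?_
        exact mul_le_mul_of_nonneg_left (hq' q.1 z) (hPBnn q.2 z)
      rw [← Finset.sum_mul, hrow, one_mul] at hlow
      have := hrec q.1 q.2 hne
      linarith
    intro v u; linarith [hq' v u]
  -- the potential identity
  have L5 : ∀ u v : Fin N, (∑ t, h v t) - N * h v u = (∑ t, h u t) - N * h u v := by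
    intro u v
    have hTsym : ∑ q, h v q * (∑ z, PB G q z * h u z)
        = ∑ q, h u q * (∑ z, PB G q z * h v z) := by
      calc ∑ q, h v q * (∑ z, PB G q z * h u z)
          = ∑ q, ∑ z, h v q * (PB G q z * h u z) := by
            exact Finset.sum_congr rfl fun q _ => Finset.mul_sum _ _ _
        _ = ∑ z, ∑ q, h v q * (PB G q z * h u z) := Finset.sum_comm
        _ = ∑ q, ∑ z, h u q * (PB G q z * h v z) := by
            refine Finset.sum_congr rfl fun z _ => Finset.sum_congr rfl fun q _ => ?_
            rw [MeetAux.PB_symm G q z]; ring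
        _ = ∑ q, h u q * (∑ z, PB G q z * h v z) := by
            exact Finset.sum_congr rfl fun q _ => (Finset.mul_sum _ _ _).symm
    have expand : ∀ a b : Fin N,
        ∑ q, h a q * (∑ z, PB G q z * h b z)
          = (∑ q, h a q * h b q) - (∑ q, h a q) + N * h a b := by
      intro a b
      have : ∀ q : Fin N, h a q * (∑ z, PB G q z * h b z)
          = h a q * h b q - h a q + (if q = b then (N:ℝ) * h a q else 0) := by
        intro q
        rw [hE b q]
        split_ifs <;> ring
      rw [Finset.sum_congr rfl fun q _ => this q]
      rw [Finset.sum_add_distrib, Finset.sum_sub_distrib]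
      have hite : ∑ q : Fin N, (if q = b then (N:ℝ) * h a q else 0) = (N:ℝ) * h a b := by
        rw [Finset.sum_ite_eq' Finset.univ b (fun q => (N:ℝ) * h a q)]
        simp
      rw [hite]
    have e1 := expand v u
    have e2 := expand u v
    have ecomm : ∑ q, h v q * h u q = ∑ q, h u q * h v q :=
      Finset.sum_congr rfl fun q _ => mul_comm _ _
    rw [e1, e2] at hTsym
    linarith [hTsym, ecomm]
  -- maximizer of S
  obtain ⟨w, _, hw⟩ := Finset.exists_max_image Finset.univ
    (fun v => ∑ t, h v t) ⟨x, Finset.mem_univ _⟩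
  have hwge : ∀ v, h v w ≤ h w v := by
    intro v
    have hl := L5 v w
    have hs := hw v (Finset.mem_univ v)
    nlinarith
  have rep_eq : ∀ a b : Fin N, h b a + (h w b - h b w) = h a b + (h w a - h a w) := by
    intro a b
    have l1 := L5 a b
    have l2 := L5 b w
    have l3 := L5 a w
    have hmul : (N:ℝ) * (h b a + (h w b - h b w)) = N * (h a b + (h w a - h a w)) := by
      ring_nf
      ring_nf at l1 l2 l3
      linarith
    exact mul_left_cancel₀ hNne hmul
  set K := Finset.univ.sup' ⟨(x, y), Finset.mem_univ (x, y)⟩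
    (fun p : Fin N × Fin N => h p.2 p.1) with hKdef
  have hKle : ∀ u v, h v u ≤ K := fun u v =>
    Finset.le_sup' (f := fun p : Fin N × Fin N => h p.2 p.1) (Finset.mem_univ (u, v))
  have hK1 : 1 ≤ K := by
    have hxne : (⟨0, by omega⟩ : Fin N) ≠ ⟨1, by omega⟩ := by
      intro he
      have := Fin.mk.injEq (0:ℕ) (by omega : (0:ℕ) < N) 1 (by omega) ▸ he
      simp [Fin.ext_iff] at he
    set u : Fin N := ⟨0, by omega⟩
    set v : Fin N := ⟨1, by omega⟩
    have hsumnn : 0 ≤ ∑ z, PB G u z * h v z :=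
      Finset.sum_nonneg fun z _ => mul_nonneg (hPBnn u z) (hnn v z)
    have := hrec v u hxne
    have hKge := hKle u v
    linarith
  have hK0 : (0:ℝ) ≤ K := by linarith
  -- the supersolution
  set g : Fin N → Fin N → ℝ := fun a b => h b a + (h w b - h b w) + K with hgdef
  have hgrep : ∀ a b, g a b = h a b + (h w a - h a w) + K := by
    intro a b
    simp only [hgdef]
    linarith [rep_eq a b]
  have hgd : ∀ a, g a a = (h w a - h a w) + K := by
    intro a; simp only [hgdef, h0 a]; ring
  have hgdnn : ∀ a, 0 ≤ g a a := by
    intro a; rw [hgd a]; have := hwge a; linarith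
  have hs1 : ∀ a b, a ≠ b → ∑ z, PB G a z * g z b = g a b - 1 := by
    intro a b hab
    have : ∀ z : Fin N, PB G a z * g z b
        = PB G a z * h b z + PB G a z * ((h w b - h b w) + K) := by
      intro z; simp only [hgdef]; ring
    rw [Finset.sum_congr rfl fun z _ => this z, Finset.sum_add_distrib,
      ← Finset.sum_mul, hrow, one_mul, hstep b a hab]
    simp only [hgdef]; ring
  have hs2 : ∀ a b, a ≠ b → ∑ z, PB G b z * g a z = g a b - 1 := by
    intro a b hab
    have hba : b ≠ a := hab.symm
    have : ∀ z : Fin N, PB G b z * g a z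
        = PB G b z * h a z + PB G b z * ((h w a - h a w) + K) := by
      intro z; rw [hgrep a z]; ring
    rw [Finset.sum_congr rfl fun z _ => this z, Finset.sum_add_distrib,
      ← Finset.sum_mul, hrow, one_mul, hstep a b hba, hgrep a b]
    ring
  -- neighbor-sum identities
  have hnbsum : ∀ (a : Fin N) (f : Fin N → ℝ),
      ∑ i ∈ G.neighborFinset a, PB G a i * f i
        = (∑ z, PB G a z * f z) - PB G a a * f a := by
    intro a f
    have hsplit : PB G a a * f a + ∑ j ∈ Finset.univ.erase a, PB G a j * f j
        = ∑ z, PB G a z * f z :=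
      Finset.add_sum_erase _ (fun j => PB G a j * f j) (Finset.mem_univ a)
    have herase : ∑ j ∈ Finset.univ.erase a, PB G a j * f j
        = ∑ j ∈ G.neighborFinset a, PB G a j * f j := by
      refine (Finset.sum_subset ?_ ?_).symm
      · intro i hi
        rw [SimpleGraph.mem_neighborFinset] at hi
        exact Finset.mem_erase.2 ⟨hi.ne', Finset.mem_univ _⟩
      · intro i hi hni
        rw [SimpleGraph.mem_neighborFinset] at hni
        rw [MeetAux.PB_zero G (Finset.ne_of_mem_erase hi).symm hni, zero_mul]
    linarith [hsplit, herase]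
  have herase2 : ∀ (a b : Fin N) (f : Fin N → ℝ), a ≠ b →
      ∑ i ∈ (G.neighborFinset a).erase b, PB G a i * f i
        = (∑ z, PB G a z * f z) - PB G a a * f a - PB G a b * f b := by
    intro a b f hab
    by_cases hb : b ∈ G.neighborFinset a
    · have h3 : ∑ i ∈ (G.neighborFinset a).erase b, PB G a i * f i + PB G a b * f b
          = ∑ z, PB G a z * f z - PB G a a * f a := by
        have h4 := Finset.sum_erase_add (G.neighborFinset a) (fun i => PB G a i * f i) hb
        rw [hnbsum a f] at h4
        exact h4
      linarith
    · rw [Finset.erase_eq_of_notMem hb, hnbsum a f]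
      rw [SimpleGraph.mem_neighborFinset] at hb
      rw [MeetAux.PB_zero G hab hb]
      ring
  have hnbr1 : ∀ a : Fin N, ∑ i ∈ G.neighborFinset a, PB G a i = 1 - PB G a a := by
    intro a
    have := hnbsum a (fun _ => 1)
    simpa [hrow a] using this
  have hcoef : ∀ (a b : Fin N), a ≠ b →
      ∑ i ∈ (G.neighborFinset a).erase b, PB G a i = 1 - PB G a a - PB G a b := by
    intro a b hab
    have := herase2 a b (fun _ => 1) hab
    simpa [hrow a] using this
  -- comparison: m ≤ g
  have comp : ∀ a b, m a b ≤ g a b := by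
    obtain ⟨p, _, hp⟩ := Finset.exists_min_image Finset.univ
      (fun p : Fin N × Fin N => g p.1 p.2 - m p.1 p.2) ⟨(x, y), Finset.mem_univ _⟩
    have hmin : ∀ a b, g p.1 p.2 - m p.1 p.2 ≤ g a b - m a b :=
      fun a b => hp (a, b) (Finset.mem_univ (a, b))
    set μ := g p.1 p.2 - m p.1 p.2 with hμdef
    have hμ : 0 ≤ μ := by
      by_contra hcon
      push_neg at hcon
      set a := p.1
      set b := p.2
      have hab : a ≠ b := by
        intro he
        have : m a b = 0 := he ▸ hdiag a
        have : μ = g a a := by rw [hμdef]; rw [← he] at *; simp [this]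
        have := hgdnn a
        rw [hμdef] at hcon
        have hma : m a b = 0 := by rw [he]; exact hdiag b
        rw [he] at hcon
        rw [hdiag b] at hcon
        have := hgdnn b
        linarith
      have hba : b ≠ a := hab.symm
      -- the meeting-time equation at (a, b)
      have hmeq := hm a b hab
      rw [hnbr1 a, hnbr1 b] at hmeq
      -- g sums
      have hG1 : ∑ i ∈ (G.neighborFinset a).erase b, PB G a i * g i b
          = (g a b - 1) - PB G a a * g a b - PB G a b * g b b := by
        rw [herase2 a b (fun i => g i b) hab, hs1 a b hab]
      have hG2 : ∑ j ∈ (G.neighborFinset b).erase a, PB G b j * g a j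
          = (g a b - 1) - PB G b b * g a b - PB G a b * g a a := by
        rw [herase2 b a (fun j => g a j) hba, hs2 a b hab, MeetAux.PB_symm G b a]
      -- m sums bounded by g sums
      have hM1 : ∑ i ∈ (G.neighborFinset a).erase b, PB G a i * m i b
          ≤ (∑ i ∈ (G.neighborFinset a).erase b, PB G a i * g i b)
            - (1 - PB G a a - PB G a b) * μ := by
        have hterm : ∀ i ∈ (G.neighborFinset a).erase b,
            PB G a i * m i b ≤ PB G a i * g i b - PB G a i * μ := by
          intro i _
          have h1 : m i b ≤ g i b - μ := by linarith [hmin i b]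
          have h2 := mul_le_mul_of_nonneg_left h1 (hPBnn a i)
          nlinarith
        have := Finset.sum_le_sum hterm
        rw [Finset.sum_sub_distrib, ← Finset.sum_mul, hcoef a b hab] at this
        linarith
      have hM2 : ∑ j ∈ (G.neighborFinset b).erase a, PB G b j * m a j
          ≤ (∑ j ∈ (G.neighborFinset b).erase a, PB G b j * g a j)
            - (1 - PB G b b - PB G a b) * μ := by
        have hterm : ∀ j ∈ (G.neighborFinset b).erase a,
            PB G b j * m a j ≤ PB G b j * g a j - PB G b j * μ := by
          intro j _
          have h1 : m a j ≤ g a j - μ := by linarith [hmin a j]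
          have h2 := mul_le_mul_of_nonneg_left h1 (hPBnn b j)
          nlinarith
        have := Finset.sum_le_sum hterm
        rw [Finset.sum_sub_distrib, ← Finset.sum_mul, hcoef b a hba,
          MeetAux.PB_symm G b a] at this
        linarith
      -- key nonnegativity facts
      have hgd2 : g a a + g b b - g a b = (h w a - h a w) + K - h b a := by
        rw [hgd a, hgd b]; simp only [hgdef]; ring
      have hgKey : 0 ≤ g a a + g b b - g a b := by
        rw [hgd2]
        have := hwge a
        have := hKle a b
        linarith
      have hγG : 0 ≤ PB G a b * (g a a + g b b - g a b) :=
        mul_nonneg (hPBnn a b) hgKey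
      have hγμ : PB G a b * μ ≤ 0 :=
        mul_nonpos_of_nonneg_of_nonpos (hPBnn a b) (le_of_lt hcon)
      have hmab : m a b = g a b - μ := by rw [hμdef]; ring
      rw [hmab] at hmeq
      nlinarith [hmeq, hM1, hM2, hG1, hG2, hγG, hγμ]
    intro a b
    linarith [hmin a b]
  -- conclude
  have hfin : m x y ≤ 3 * K := by
    have := comp x y
    have h1 : g x y = h y x + (h w y - h y w) + K := rfl
    have := hKle x y
    have := hKle y w
    have := hnn y w
    simp only [hgdef] at *
    linarith [comp x y]
  linarith
end

section
/- Let G be a connected simple graph on N ≥ 2 vertices with biased random walk matrix P^B. Then any meeting-time solution m for the paired process X satisfies m(x,y) < 12N³ for all vertices x, y. -/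
namespace MT12
open Finset SimpleGraph

variable {N : ℕ} (G : SimpleGraph (Fin N)) [DecidableRel G.Adj]

lemma degree_pos (hN : 2 ≤ N) (hconn : G.Connected) (v : Fin N) : 0 < G.degree v := by
  obtain ⟨w, hw⟩ := Fintype.exists_ne_of_one_lt_card (by simpa using hN.trans_lt' one_lt_two) v
  obtain ⟨p⟩ := hconn.preconnected w v
  have hp : p.reverse.length ≠ 0 := by
    intro h
    have := SimpleGraph.Walk.eq_of_length_eq_zero h
    exact hw this.symm
  have : G.Adj v (p.reverse.getVert 1) := by
    have := SimpleGraph.Walk.adj_getVert_succ p.reverse (i := 0) (Nat.pos_of_ne_zero hp)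
    simpa [SimpleGraph.Walk.getVert_zero] using this
  exact G.degree_pos_iff_exists_adj v |>.mpr ⟨_, this⟩

variable {G}

lemma PB_of_adj {i j : Fin N} (h : G.Adj i j) :
    PB G i j = (1 / (N : ℝ)) * (1 / (G.degree i : ℝ) + 1 / (G.degree j : ℝ)) := by
  have : i ≠ j := h.ne
  simp [PB, this, h]

lemma PB_of_not_adj {i j : Fin N} (hne : i ≠ j) (h : ¬ G.Adj i j) : PB G i j = 0 := by
  simp [PB, hne, h]

lemma PB_symm (i j : Fin N) : PB G i j = PB G j i := by
  by_cases h : i = j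
  · subst h; rfl
  · have h' : ¬ j = i := fun hh => h hh.symm
    by_cases hadj : G.Adj i j
    · rw [PB_of_adj hadj, PB_of_adj hadj.symm]; ring
    · have hadj' : ¬ G.Adj j i := fun hh => hadj hh.symm
      rw [PB_of_not_adj h hadj, PB_of_not_adj h' hadj']

lemma PB_offdiag_nonneg {i j : Fin N} (hne : i ≠ j) : 0 ≤ PB G i j := by
  by_cases h : G.Adj i j
  · rw [PB_of_adj h]
    positivity
  · rw [PB_of_not_adj hne h]

lemma PB_adj_pos (hN : 2 ≤ N) (hconn : G.Connected) {i j : Fin N} (h : G.Adj i j) :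
    0 < PB G i j := by
  rw [PB_of_adj h]
  have h1 : (0:ℝ) < (G.degree i : ℝ) := by exact_mod_cast degree_pos G hN hconn i
  have h2 : (0:ℝ) < (G.degree j : ℝ) := by exact_mod_cast degree_pos G hN hconn j
  have hN0 : (0:ℝ) < N := by exact_mod_cast (by omega : 0 < N)
  positivity

lemma PB_adj_ge {i j : Fin N} (hN : 2 ≤ N) (hconn : G.Connected) (h : G.Adj i j) :
    1 / ((N : ℝ) * (G.degree i : ℝ)) ≤ PB G i j := by
  rw [PB_of_adj h]
  have h1 : (0:ℝ) < (G.degree i : ℝ) := by exact_mod_cast degree_pos G hN hconn i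
  have h2 : (0:ℝ) < (G.degree j : ℝ) := by exact_mod_cast degree_pos G hN hconn j
  have hN0 : (0:ℝ) < N := by exact_mod_cast (by omega : 0 < N)
  have key : (1:ℝ)/((N:ℝ)*(G.degree i:ℝ)) = 1/(N:ℝ) * (1/(G.degree i:ℝ)) := by
    rw [one_div, mul_inv, one_div, one_div]
  rw [key]
  exact mul_le_mul_of_nonneg_left (le_add_of_nonneg_right (by positivity)) (by positivity)

/-- row sums of `PB` equal 1 -/
lemma PB_row_sum (hN : 2 ≤ N) (hconn : G.Connected) (x : Fin N) :
    ∑ j, PB G x j = 1 := by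
  classical
  have hN0 : (0:ℝ) < N := by positivity
  have hdx : (0:ℝ) < (G.degree x : ℝ) := by exact_mod_cast degree_pos G hN hconn x
  have hx : x ∉ G.neighborFinset x := by simp
  have hsub : G.neighborFinset x ⊆ Finset.univ.erase x := by
    intro i hi
    simp only [Finset.mem_erase, Finset.mem_univ, and_true]
    intro hix
    exact (G.mem_neighborFinset x i |>.mp hi).ne' (by rw [hix])
  have hzero : ∀ i ∈ Finset.univ.erase x, i ∉ G.neighborFinset x → PB G x i = 0 := by
    intro i hi hni
    have hne : x ≠ i := fun h => (Finset.mem_erase.mp hi).1 h.symm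
    exact PB_of_not_adj hne (by simpa [G.mem_neighborFinset] using hni)
  have hsplit : ∑ j, PB G x j = PB G x x + ∑ j ∈ Finset.univ.erase x, PB G x j := by
    rw [Finset.add_sum_erase _ _ (Finset.mem_univ x)]
  have herase : ∑ j ∈ Finset.univ.erase x, PB G x j = ∑ j ∈ G.neighborFinset x, PB G x j :=
    (Finset.sum_subset hsub hzero).symm
  have hnbr : ∑ j ∈ G.neighborFinset x, PB G x j
      = 1 / (N:ℝ) + ∑ k ∈ G.neighborFinset x, 1 / ((N : ℝ) * (G.degree k : ℝ)) := by
    have : ∀ j ∈ G.neighborFinset x, PB G x j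
        = 1/(N:ℝ) * (1 / (G.degree x : ℝ)) + 1 / ((N:ℝ) * (G.degree j : ℝ)) := by
      intro j hj
      have hadj : G.Adj x j := (G.mem_neighborFinset x j).mp hj
      have hdj : (0:ℝ) < (G.degree j : ℝ) := by exact_mod_cast degree_pos G hN hconn j
      rw [PB_of_adj hadj]
      field_simp
    rw [Finset.sum_congr rfl this, Finset.sum_add_distrib, Finset.sum_const,
      SimpleGraph.card_neighborFinset_eq_degree]
    congr 1
    rw [nsmul_eq_mul]
    field_simp
  have hdiag : PB G x x = 1 - 1/(N:ℝ) - ∑ k ∈ G.neighborFinset x, 1 / ((N : ℝ) * (G.degree k : ℝ)) := by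
    simp [PB]
  rw [hsplit, herase, hnbr, hdiag]
  ring

lemma PB_nbr_sum (hN : 2 ≤ N) (hconn : G.Connected) (x : Fin N) :
    ∑ i ∈ G.neighborFinset x, PB G x i = 1 - PB G x x := by
  classical
  have := PB_row_sum (G := G) hN hconn x
  have hsub : G.neighborFinset x ⊆ Finset.univ.erase x := by
    intro i hi
    simp only [Finset.mem_erase, Finset.mem_univ, and_true]
    intro hix
    exact (G.mem_neighborFinset x i |>.mp hi).ne' (by rw [hix])
  have hzero : ∀ i ∈ Finset.univ.erase x, i ∉ G.neighborFinset x → PB G x i = 0 := by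
    intro i hi hni
    have hne : x ≠ i := fun h => (Finset.mem_erase.mp hi).1 h.symm
    exact PB_of_not_adj hne (by simpa [G.mem_neighborFinset] using hni)
  have herase : ∑ j ∈ Finset.univ.erase x, PB G x j = ∑ j ∈ G.neighborFinset x, PB G x j :=
    (Finset.sum_subset hsub hzero).symm
  have hsplit : ∑ j, PB G x j = PB G x x + ∑ j ∈ Finset.univ.erase x, PB G x j := by
    rw [Finset.add_sum_erase _ _ (Finset.mem_univ x)]
  rw [hsplit, herase] at this
  linarith

end MT12

namespace MT12
open Finset SimpleGraph
open scoped Matrix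

variable {N : ℕ} (G : SimpleGraph (Fin N)) [DecidableRel G.Adj]

noncomputable def Am : Matrix (Fin N) (Fin N) ℝ :=
  Matrix.of fun u v => (if u = v then 1 else 0) - PB G u v + (N:ℝ)⁻¹

variable {G}

lemma Am_apply (u v : Fin N) :
    Am G u v = (if u = v then 1 else 0) - PB G u v + (N:ℝ)⁻¹ := rfl

lemma Am_symm (u v : Fin N) : Am G u v = Am G v u := by
  rw [Am_apply, Am_apply, PB_symm]
  by_cases h : u = v
  · subst h; rfl
  · have h' : ¬ v = u := fun hh => h hh.symm
    simp [h, h']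

lemma Am_mulVec (f : Fin N → ℝ) (u : Fin N) :
    (Am G).mulVec f u = f u - (∑ v, PB G u v * f v) + (∑ v, f v) * (N:ℝ)⁻¹ := by
  unfold Matrix.mulVec dotProduct
  have : ∀ v, Am G u v * f v
      = (if u = v then f v else 0) - PB G u v * f v + (N:ℝ)⁻¹ * f v := by
    intro v
    rw [Am_apply]
    by_cases h : u = v <;> simp [h] <;> ring
  rw [Finset.sum_congr rfl (fun v _ => this v)]
  rw [Finset.sum_add_distrib, Finset.sum_sub_distrib, Finset.sum_ite_eq]
  simp only [Finset.mem_univ, if_true]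
  congr 1
  rw [← Finset.mul_sum, mul_comm]

lemma quad_eq (hN : 2 ≤ N) (hconn : G.Connected) (f : Fin N → ℝ) :
    f ⬝ᵥ (Am G).mulVec f
      = (∑ u, ∑ v, PB G u v * (f u - f v)^2)/2 + (∑ u, f u)^2/(N:ℝ) := by
  have hrow : ∀ u, ∑ v, PB G u v = 1 := PB_row_sum hN hconn
  have hcol : ∀ v, ∑ u, PB G u v = 1 := by
    intro v
    calc ∑ u, PB G u v = ∑ u, PB G v u := Finset.sum_congr rfl (fun u _ => PB_symm u v)
    _ = 1 := hrow v
  have hN0 : (N:ℝ) ≠ 0 := by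
    have : 0 < N := by omega
    exact_mod_cast this.ne'
  -- expand LHS
  have hL : f ⬝ᵥ (Am G).mulVec f
      = (∑ u, (f u)^2) - (∑ u, ∑ v, PB G u v * (f u * f v)) + (∑ u, f u)^2/(N:ℝ) := by
    unfold dotProduct
    rw [Finset.sum_congr rfl (fun u _ => by rw [Am_mulVec])]
    have : ∀ u, f u * (f u - (∑ v, PB G u v * f v) + (∑ v, f v) * (N:ℝ)⁻¹)
        = (f u)^2 - (∑ v, PB G u v * (f u * f v)) + f u * ((∑ v, f v) * (N:ℝ)⁻¹) := by
      intro u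
      have hps : f u * (∑ v, PB G u v * f v) = ∑ v, PB G u v * (f u * f v) := by
        rw [Finset.mul_sum]
        exact Finset.sum_congr rfl (fun v _ => by ring)
      calc f u * (f u - (∑ v, PB G u v * f v) + (∑ v, f v) * (N:ℝ)⁻¹)
          = (f u)^2 - f u * (∑ v, PB G u v * f v) + f u * ((∑ v, f v) * (N:ℝ)⁻¹) := by ring
        _ = _ := by rw [hps]
    rw [Finset.sum_congr rfl (fun u _ => this u)]
    rw [Finset.sum_add_distrib, Finset.sum_sub_distrib]
    congr 1
    rw [← Finset.sum_mul, sq, div_eq_mul_inv]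
    ring
  -- expand double sum on RHS
  have hR : ∑ u, ∑ v, PB G u v * (f u - f v)^2
      = (∑ u, (f u)^2) + (∑ u, (f u)^2) - 2 * (∑ u, ∑ v, PB G u v * (f u * f v)) := by
    have expand : ∀ u v, PB G u v * (f u - f v)^2
        = PB G u v * (f u)^2 + PB G u v * (f v)^2 - 2 * (PB G u v * (f u * f v)) := by
      intro u v; ring
    rw [Finset.sum_congr rfl (fun u _ => Finset.sum_congr rfl (fun v _ => expand u v))]
    have h1 : ∀ u : Fin N, ∑ v, (PB G u v * (f u)^2 + PB G u v * (f v)^2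
          - 2 * (PB G u v * (f u * f v)))
        = (f u)^2 + (∑ v, PB G u v * (f v)^2) - 2 * (∑ v, PB G u v * (f u * f v)) := by
      intro u
      rw [Finset.sum_sub_distrib, Finset.sum_add_distrib, ← Finset.sum_mul, ← Finset.mul_sum,
        hrow, one_mul]
    rw [Finset.sum_congr rfl (fun u _ => h1 u), Finset.sum_sub_distrib, Finset.sum_add_distrib]
    have h2 : ∑ u : Fin N, ∑ v, PB G u v * (f v)^2 = ∑ u, (f u)^2 := by
      rw [Finset.sum_comm]
      refine Finset.sum_congr rfl (fun v _ => ?_)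
      rw [← Finset.sum_mul, hcol, one_mul]
    have h3 : ∑ u : Fin N, 2 * (∑ v, PB G u v * (f u * f v))
        = 2 * ∑ u, ∑ v, PB G u v * (f u * f v) := by
      rw [Finset.mul_sum]
    rw [h2, h3]
  rw [hL, hR]
  ring

lemma quad_nonneg (hN : 2 ≤ N) (hconn : G.Connected) (f : Fin N → ℝ) :
    0 ≤ f ⬝ᵥ (Am G).mulVec f := by
  rw [quad_eq hN hconn]
  have hN0 : (0:ℝ) < (N:ℝ) := by exact_mod_cast (by omega : 0 < N)
  have h1 : 0 ≤ ∑ u, ∑ v, PB G u v * (f u - f v)^2 := by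
    refine Finset.sum_nonneg (fun u _ => Finset.sum_nonneg (fun v _ => ?_))
    by_cases h : u = v
    · subst h; simp
    · exact mul_nonneg (PB_offdiag_nonneg h) (sq_nonneg _)
  positivity

lemma mulVec_eq_zero (hN : 2 ≤ N) (hconn : G.Connected) (f : Fin N → ℝ)
    (hf : (Am G).mulVec f = 0) : f = 0 := by
  have hq : f ⬝ᵥ (Am G).mulVec f = 0 := by rw [hf]; simp
  rw [quad_eq hN hconn] at hq
  have hN0 : (0:ℝ) < (N:ℝ) := by exact_mod_cast (by omega : 0 < N)
  have h1 : 0 ≤ ∑ u, ∑ v, PB G u v * (f u - f v)^2 := by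
    refine Finset.sum_nonneg (fun u _ => Finset.sum_nonneg (fun v _ => ?_))
    by_cases h : u = v
    · subst h; simp
    · exact mul_nonneg (PB_offdiag_nonneg h) (sq_nonneg _)
  have h2 : 0 ≤ (∑ u, f u)^2/(N:ℝ) := by positivity
  have hsum0 : ∑ u, ∑ v, PB G u v * (f u - f v)^2 = 0 := by linarith
  have hS0 : (∑ u, f u)^2/(N:ℝ) = 0 := by linarith
  -- each term is 0
  have hterm : ∀ u v : Fin N, PB G u v * (f u - f v)^2 = 0 := by
    have houter := (Finset.sum_eq_zero_iff_of_nonneg (fun u _ =>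
      Finset.sum_nonneg (fun v _ => by
        by_cases h : u = v
        · subst h; simp
        · exact mul_nonneg (PB_offdiag_nonneg h) (sq_nonneg _)))).mp hsum0
    intro u v
    have hinner := (Finset.sum_eq_zero_iff_of_nonneg (fun v _ => by
        by_cases h : u = v
        · subst h; simp
        · exact mul_nonneg (PB_offdiag_nonneg h) (sq_nonneg _))).mp
      (houter u (Finset.mem_univ u))
    exact hinner v (Finset.mem_univ v)
  have hedge : ∀ u v : Fin N, G.Adj u v → f u = f v := by
    intro u v hadj
    have := hterm u v
    have hP : 0 < PB G u v := PB_adj_pos hN hconn hadj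
    have : (f u - f v)^2 = 0 := by
      rcases mul_eq_zero.mp this with h | h
      · exact absurd h hP.ne'
      · exact h
    have := pow_eq_zero_iff (n := 2) (by norm_num) |>.mp this
    linarith
  have hwalk : ∀ (u v : Fin N) (p : G.Walk u v), f u = f v := by
    intro u v p
    induction p with
    | nil => rfl
    | cons h p ih => exact (hedge _ _ h).trans ih
  have hconst : ∀ u v : Fin N, f u = f v := by
    intro u v
    obtain ⟨p⟩ := hconn.preconnected u v
    exact hwalk u v p
  have hsum : (∑ u, f u) = 0 := by
    have := div_eq_zero_iff.mp hS0
    rcases this with h | h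
    · exact pow_eq_zero_iff (n := 2) (by norm_num) |>.mp h
    · exact absurd h hN0.ne'
  funext u
  have : ∑ v : Fin N, f v = ∑ v : Fin N, f u :=
    Finset.sum_congr rfl (fun v _ => (hconst v u))
  rw [hsum] at this
  simp only [Finset.sum_const, Finset.card_univ, Fintype.card_fin, nsmul_eq_mul] at this
  have hN0' : (N:ℝ) ≠ 0 := hN0.ne'
  have := this.symm
  rcases mul_eq_zero.mp this with h | h
  · exact absurd h hN0'
  · exact h

lemma Am_det_ne_zero (hN : 2 ≤ N) (hconn : G.Connected) : (Am G).det ≠ 0 := by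
  intro h
  obtain ⟨v, hv, hv0⟩ := (Matrix.exists_mulVec_eq_zero_iff).mpr h
  exact hv (mulVec_eq_zero hN hconn v hv0)

variable (G)

noncomputable def Zm : Matrix (Fin N) (Fin N) ℝ := (Am G)⁻¹

variable {G}

lemma AZ (hN : 2 ≤ N) (hconn : G.Connected) : Am G * Zm G = 1 :=
  Matrix.mul_nonsing_inv _ (isUnit_iff_ne_zero.mpr (Am_det_ne_zero hN hconn))

lemma ZA (hN : 2 ≤ N) (hconn : G.Connected) : Zm G * Am G = 1 :=
  Matrix.nonsing_inv_mul _ (isUnit_iff_ne_zero.mpr (Am_det_ne_zero hN hconn))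

lemma Zm_symm (u v : Fin N) : Zm G u v = Zm G v u := by
  have hAt : (Am G)ᵀ = Am G := by
    ext u v
    exact Am_symm v u
  have : (Zm G)ᵀ = Zm G := by
    unfold Zm
    rw [Matrix.transpose_nonsing_inv, hAt]
  calc Zm G u v = (Zm G)ᵀ v u := rfl
  _ = Zm G v u := by rw [this]

lemma Z_row_sum (hN : 2 ≤ N) (hconn : G.Connected) (u : Fin N) :
    ∑ v, Zm G u v = 1 := by
  have hN0 : (N:ℝ) ≠ 0 := by exact_mod_cast (by omega : 0 < N).ne'
  have hAe : (Am G).mulVec (fun _ => (1:ℝ)) = fun _ => (1:ℝ) := by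
    funext u
    rw [Am_mulVec]
    simp only [mul_one]
    rw [PB_row_sum hN hconn]
    have hsum1 : (∑ _v : Fin N, (1:ℝ)) = (N:ℝ) := by simp
    rw [hsum1, mul_inv_cancel₀ hN0]
    ring
  have : (Zm G).mulVec (fun _ => (1:ℝ)) = fun _ => (1:ℝ) := by
    conv_lhs => rw [← hAe]
    rw [Matrix.mulVec_mulVec, ZA hN hconn]
    simp
  have := congrFun this u
  simpa [Matrix.mulVec, dotProduct] using this

lemma Z_col_sum (hN : 2 ≤ N) (hconn : G.Connected) (v : Fin N) :
    ∑ u, Zm G u v = 1 := by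
  calc ∑ u, Zm G u v = ∑ u, Zm G v u := Finset.sum_congr rfl (fun u _ => Zm_symm u v)
  _ = 1 := Z_row_sum hN hconn v

/-- key entry identity: `∑ k, P u k * Z k v = Z u v + 1/N - δ_{uv}` -/
lemma PZ_entry (hN : 2 ≤ N) (hconn : G.Connected) (u v : Fin N) :
    ∑ k, PB G u k * Zm G k v = Zm G u v + (N:ℝ)⁻¹ - (if u = v then 1 else 0) := by
  have h1 := congrFun (congrFun (AZ hN hconn) u) v
  have hentry : (Am G * Zm G) u v = ∑ k, Am G u k * Zm G k v := by
    rfl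
  have hone : (1 : Matrix (Fin N) (Fin N) ℝ) u v = (if u = v then 1 else 0) :=
    Matrix.one_apply
  rw [hentry, hone] at h1
  have hexp : ∀ k, Am G u k * Zm G k v
      = (if u = k then Zm G k v else 0) - PB G u k * Zm G k v + (N:ℝ)⁻¹ * Zm G k v := by
    intro k
    rw [Am_apply]
    by_cases h : u = k <;> simp [h] <;> ring
  rw [Finset.sum_congr rfl (fun k _ => hexp k), Finset.sum_add_distrib,
    Finset.sum_sub_distrib, Finset.sum_ite_eq, ← Finset.mul_sum, Z_col_sum hN hconn] at h1
  simp only [Finset.mem_univ, if_true, mul_one] at h1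
  linarith [h1]

end MT12

namespace MT12
open Finset SimpleGraph
open scoped Matrix

variable {N : ℕ} {G : SimpleGraph (Fin N)} [DecidableRel G.Adj]

lemma dist_getVert_le (hconn : G.Connected) :
    ∀ {a b : Fin N} (w : G.Walk a b) (i j : ℕ), i ≤ j →
      G.dist (w.getVert i) (w.getVert j) ≤ j - i := by
  intro a b w
  induction w with
  | nil =>
    intro i j _
    simp [SimpleGraph.Walk.getVert, SimpleGraph.dist_self]
  | @cons u v b h p ih =>
    intro i j hij
    match i, j with
    | 0, 0 => simp [SimpleGraph.dist_self]
    | 0, (s+1) =>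
      have h0 : (SimpleGraph.Walk.cons h p).getVert 0 = u := rfl
      have hs : (SimpleGraph.Walk.cons h p).getVert (s+1) = p.getVert s := rfl
      rw [h0, hs]
      have htri : G.dist u (p.getVert s) ≤ G.dist u v + G.dist v (p.getVert s) :=
        hconn.dist_triangle
      have h1 : G.dist u v = 1 := SimpleGraph.dist_eq_one_iff_adj.mpr h
      have h2 : G.dist v (p.getVert s) ≤ s := by
        have := ih 0 s (Nat.zero_le s)
        simpa [SimpleGraph.Walk.getVert_zero] using this
      omega
    | (r+1), (s+1) =>
      have hr : (SimpleGraph.Walk.cons h p).getVert (r+1) = p.getVert r := rfl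
      have hs : (SimpleGraph.Walk.cons h p).getVert (s+1) = p.getVert s := rfl
      rw [hr, hs]
      have := ih r s (by omega)
      omega

lemma geo_dist_eq (hconn : G.Connected) {x y : Fin N} (w : G.Walk x y)
    (hlen : w.length = G.dist x y) {i j : ℕ} (hij : i ≤ j) (hj : j ≤ w.length) :
    G.dist (w.getVert i) (w.getVert j) = j - i := by
  have hle := dist_getVert_le hconn w i j hij
  have h1 : G.dist x (w.getVert i) ≤ i := by
    have := dist_getVert_le hconn w 0 i (Nat.zero_le i)
    simpa [SimpleGraph.Walk.getVert_zero] using this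
  have h2 : G.dist (w.getVert j) y ≤ w.length - j := by
    have := dist_getVert_le hconn w j w.length hj
    simpa [SimpleGraph.Walk.getVert_length] using this
  have htri : G.dist x y ≤ G.dist x (w.getVert i) + G.dist (w.getVert i) (w.getVert j)
      + G.dist (w.getVert j) y := by
    have t1 : G.dist x y ≤ G.dist x (w.getVert j) + G.dist (w.getVert j) y :=
      hconn.dist_triangle
    have t2 : G.dist x (w.getVert j) ≤ G.dist x (w.getVert i)
        + G.dist (w.getVert i) (w.getVert j) := hconn.dist_triangle
    omega
  omega

lemma geo_inj (hconn : G.Connected) {x y : Fin N} (w : G.Walk x y)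
    (hlen : w.length = G.dist x y) {i j : ℕ} (hi : i ≤ w.length) (hj : j ≤ w.length)
    (hne : i ≠ j) : w.getVert i ≠ w.getVert j := by
  rcases Nat.lt_or_ge i j with hlt | hge
  · intro heq
    have := geo_dist_eq hconn w hlen hlt.le hj
    rw [heq, SimpleGraph.dist_self] at this
    omega
  · have hlt : j < i := by omega
    intro heq
    have := geo_dist_eq hconn w hlen hlt.le hi
    rw [heq.symm, SimpleGraph.dist_self] at this
    omega

lemma window_card (hconn : G.Connected) {x y : Fin N} (w : G.Walk x y)
    (hlen : w.length = G.dist x y) (u : Fin N) :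
    ((Finset.range (w.length + 1)).filter (fun t => G.Adj u (w.getVert t))).card ≤ 3 := by
  set T := (Finset.range (w.length + 1)).filter (fun t => G.Adj u (w.getVert t)) with hT
  rcases T.eq_empty_or_nonempty with h | h
  · simp [h]
  · have hmin := T.min'_mem h
    set t0 := T.min' h with ht0
    have hsub : T ⊆ Finset.Icc t0 (t0 + 2) := by
      intro t ht
      have h1 : t0 ≤ t := T.min'_le t ht
      have ht0T := hmin
      rw [hT, Finset.mem_filter, Finset.mem_range] at ht ht0T
      have hd : G.dist (w.getVert t0) (w.getVert t) = t - t0 :=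
        geo_dist_eq hconn w hlen h1 (by omega)
      have hd1 : G.dist (w.getVert t0) u = 1 := SimpleGraph.dist_eq_one_iff_adj.mpr ht0T.2.symm
      have hd2 : G.dist u (w.getVert t) = 1 := SimpleGraph.dist_eq_one_iff_adj.mpr ht.2
      have htri : G.dist (w.getVert t0) (w.getVert t)
          ≤ G.dist (w.getVert t0) u + G.dist u (w.getVert t) := hconn.dist_triangle
      rw [Finset.mem_Icc]
      omega
    calc T.card ≤ (Finset.Icc t0 (t0+2)).card := Finset.card_le_card hsub
    _ = 3 := by rw [Nat.card_Icc]; omega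

lemma deg_sum_le (hconn : G.Connected) {x y : Fin N} (w : G.Walk x y)
    (hlen : w.length = G.dist x y) :
    ∑ t ∈ Finset.range (w.length + 1), G.degree (w.getVert t) ≤ 3 * N := by
  have hdeg : ∀ t, G.degree (w.getVert t)
      = ∑ u : Fin N, if G.Adj u (w.getVert t) then 1 else 0 := by
    intro t
    rw [← SimpleGraph.card_neighborFinset_eq_degree, SimpleGraph.neighborFinset_eq_filter,
      Finset.card_filter]
    refine Finset.sum_congr rfl (fun u _ => ?_)
    by_cases h : G.Adj (w.getVert t) u
    · simp [h, h.symm]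
    · have h' : ¬ G.Adj u (w.getVert t) := fun hh => h hh.symm
      simp [h, h']
  calc ∑ t ∈ Finset.range (w.length + 1), G.degree (w.getVert t)
      = ∑ t ∈ Finset.range (w.length + 1), ∑ u : Fin N, if G.Adj u (w.getVert t) then 1 else 0 :=
        Finset.sum_congr rfl (fun t _ => hdeg t)
    _ = ∑ u : Fin N, ∑ t ∈ Finset.range (w.length + 1), if G.Adj u (w.getVert t) then 1 else 0 :=
        Finset.sum_comm
    _ = ∑ u : Fin N, ((Finset.range (w.length + 1)).filter
          (fun t => G.Adj u (w.getVert t))).card := by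
        refine Finset.sum_congr rfl (fun u _ => ?_)
        rw [Finset.card_filter]
    _ ≤ ∑ _u : Fin N, 3 := Finset.sum_le_sum (fun u _ => window_card hconn w hlen u)
    _ = 3 * N := by simp [Finset.sum_const, Finset.card_univ, mul_comm]

/-- The key variational inequality. -/
lemma key_ineq (hN : 2 ≤ N) (hconn : G.Connected) (f : Fin N → ℝ) (x y : Fin N) :
    2*(f x - f y) ≤ f ⬝ᵥ (Am G).mulVec f + 3*(N:ℝ)^2 := by
  have hQ0 := quad_nonneg hN hconn f
  have hN0 : (0:ℝ) < (N:ℝ) := by exact_mod_cast (by omega : 0 < N)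
  by_cases hxy : x = y
  · subst hxy; nlinarith
  obtain ⟨w, hw⟩ := hconn.exists_walk_length_eq_dist x y
  set L := w.length with hL
  set v : ℕ → Fin N := fun t => w.getVert t with hv
  set Pt : ℕ → ℝ := fun t => PB G (v t) (v (t+1)) with hPt
  set d : ℕ → ℝ := fun t => f (v t) - f (v (t+1)) with hd
  have hadj : ∀ t, t < L → G.Adj (v t) (v (t+1)) := fun t ht =>
    SimpleGraph.Walk.adj_getVert_succ w ht
  have hPpos : ∀ t, t < L → 0 < Pt t := fun t ht => PB_adj_pos hN hconn (hadj t ht)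
  -- telescoping
  have htel : f x - f y = ∑ t ∈ Finset.range L, d t := by
    have := Finset.sum_range_sub' (f := fun t => f (v t)) L
    rw [this]
    have h0 : v 0 = x := SimpleGraph.Walk.getVert_zero w
    have hLy : v L = y := SimpleGraph.Walk.getVert_length w
    rw [h0, hLy]
  -- per-step AM-GM
  have hstep : ∀ t ∈ Finset.range L, 2 * d t ≤ Pt t * (d t)^2 + (N:ℝ) * (G.degree (v t)) := by
    intro t ht
    rw [Finset.mem_range] at ht
    have hP := hPpos t ht
    have hinv : 1 / Pt t ≤ (N:ℝ) * (G.degree (v t)) := by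
      have hge := PB_adj_ge hN hconn (hadj t ht)
      have hdt : (0:ℝ) < (G.degree (v t) : ℝ) := by
        exact_mod_cast degree_pos G hN hconn (v t)
      have hpos : (0:ℝ) < 1 / ((N:ℝ) * (G.degree (v t) : ℝ)) := by positivity
      calc 1 / Pt t ≤ 1 / (1 / ((N:ℝ) * (G.degree (v t) : ℝ))) :=
            one_div_le_one_div_of_le hpos hge
      _ = (N:ℝ) * (G.degree (v t)) := by rw [one_div_one_div]
    have h3 : Pt t * (Pt t * (d t)^2 + 1/Pt t - 2*d t) = (Pt t * d t - 1)^2 := by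
      field_simp
      ring
    have h4 : (0:ℝ) ≤ Pt t * (Pt t * (d t)^2 + 1/Pt t - 2*d t) := by
      rw [h3]; exact sq_nonneg _
    have h5 : (0:ℝ) ≤ Pt t * (d t)^2 + 1/Pt t - 2*d t := by
      have h6 : Pt t * 0 ≤ Pt t * (Pt t * (d t)^2 + 1/Pt t - 2*d t) := by
        rw [mul_zero]; exact h4
      have := (mul_le_mul_iff_right₀ hP).mp h6
      linarith
    have h7 : 2 * d t ≤ Pt t * (d t)^2 + 1/Pt t := by linarith [h5]
    calc 2 * d t ≤ Pt t * (d t)^2 + 1/Pt t := h7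
      _ ≤ Pt t * (d t)^2 + (N:ℝ) * (G.degree (v t)) := by linarith [hinv]
  -- sum of Pt * d^2 is at most the quadratic form
  have hQbound : ∑ t ∈ Finset.range L, Pt t * (d t)^2 ≤ f ⬝ᵥ (Am G).mulVec f := by
    rw [quad_eq hN hconn]
    have hSnn : 0 ≤ (∑ u, f u)^2/(N:ℝ) := by positivity
    have hdouble : 2 * (∑ t ∈ Finset.range L, Pt t * (d t)^2)
        ≤ ∑ u, ∑ v', PB G u v' * (f u - f v')^2 := by
      -- set up the two image sets
      set g : Fin N × Fin N → ℝ := fun p => PB G p.1 p.2 * (f p.1 - f p.2)^2 with hg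
      have hgnn : ∀ p : Fin N × Fin N, 0 ≤ g p := by
        intro p
        by_cases h : p.1 = p.2
        · simp [hg, h]
        · exact mul_nonneg (PB_offdiag_nonneg h) (sq_nonneg _)
      have hinj1 : ∀ i ∈ Finset.range L, ∀ j ∈ Finset.range L,
          (v i, v (i+1)) = (v j, v (j+1)) → i = j := by
        intro i hi j hj hp
        rw [Finset.mem_range] at hi hj
        by_contra hne
        exact geo_inj hconn w hw (by omega) (by omega) hne (congrArg Prod.fst hp)
      have hinj2 : ∀ i ∈ Finset.range L, ∀ j ∈ Finset.range L,
          (v (i+1), v i) = (v (j+1), v j) → i = j := by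
        intro i hi j hj hp
        rw [Finset.mem_range] at hi hj
        by_contra hne
        exact geo_inj hconn w hw (by omega) (by omega) hne (congrArg Prod.snd hp)
      set s1 : Finset (Fin N × Fin N) := (Finset.range L).image (fun t => (v t, v (t+1)))
      set s2 : Finset (Fin N × Fin N) := (Finset.range L).image (fun t => (v (t+1), v t))
      have hdisj : Disjoint s1 s2 := by
        rw [Finset.disjoint_left]
        intro p hp1 hp2
        simp only [s1, s2, Finset.mem_image, Finset.mem_range] at hp1 hp2
        obtain ⟨i, hi, hpi⟩ := hp1
        obtain ⟨j, hj, hpj⟩ := hp2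
        have h1 : v i = v (j+1) := by rw [← hpj] at hpi; exact congrArg Prod.fst hpi
        have h2 : v (i+1) = v j := by rw [← hpj] at hpi; exact congrArg Prod.snd hpi
        have hij : i = j + 1 := by
          by_contra hne
          exact geo_inj hconn w hw (by omega) (by omega) hne h1
        have hji : i + 1 = j := by
          by_contra hne
          exact geo_inj hconn w hw (by omega) (by omega) hne h2
        omega
      have hs1 : ∑ p ∈ s1, g p = ∑ t ∈ Finset.range L, Pt t * (d t)^2 := by
        rw [Finset.sum_image hinj1]
      have hs2 : ∑ p ∈ s2, g p = ∑ t ∈ Finset.range L, Pt t * (d t)^2 := by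
        rw [Finset.sum_image hinj2]
        refine Finset.sum_congr rfl (fun t ht => ?_)
        simp only [hg]
        rw [PB_symm]
        have : (f (v (t+1)) - f (v t))^2 = (f (v t) - f (v (t+1)))^2 := by ring
        rw [this]
      have hsub : s1 ∪ s2 ⊆ Finset.univ ×ˢ Finset.univ := by
        intro p _; simp
      have hmain : ∑ p ∈ s1 ∪ s2, g p ≤ ∑ p ∈ Finset.univ ×ˢ Finset.univ, g p :=
        Finset.sum_le_sum_of_subset_of_nonneg hsub (fun p _ _ => hgnn p)
      rw [Finset.sum_union hdisj, hs1, hs2] at hmain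
      have hprod : ∑ p ∈ Finset.univ ×ˢ Finset.univ, g p
          = ∑ u, ∑ v', PB G u v' * (f u - f v')^2 := by
        rw [Finset.sum_product]
      linarith
    linarith
  -- sum of degrees
  have hdegsum : ∑ t ∈ Finset.range L, (N:ℝ) * (G.degree (v t))
      ≤ 3*(N:ℝ)^2 := by
    have h1 : ∑ t ∈ Finset.range L, (G.degree (v t) : ℝ)
        ≤ ∑ t ∈ Finset.range (L+1), (G.degree (v t) : ℝ) := by
      apply Finset.sum_le_sum_of_subset_of_nonneg
      · exact Finset.range_subset_range.mpr (by omega)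
      · intro t _ _; positivity
    have h2 : ∑ t ∈ Finset.range (L+1), (G.degree (v t) : ℝ) ≤ 3*(N:ℝ) := by
      have := deg_sum_le hconn w hw
      calc ∑ t ∈ Finset.range (L+1), (G.degree (v t) : ℝ)
          = ((∑ t ∈ Finset.range (L+1), G.degree (v t) : ℕ) : ℝ) := by
            rw [Nat.cast_sum]
        _ ≤ ((3*N : ℕ) : ℝ) := by exact_mod_cast this
        _ = 3*(N:ℝ) := by push_cast; ring
    calc ∑ t ∈ Finset.range L, (N:ℝ) * (G.degree (v t))
        = (N:ℝ) * ∑ t ∈ Finset.range L, (G.degree (v t) : ℝ) := by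
          rw [Finset.mul_sum]
      _ ≤ (N:ℝ) * (3*(N:ℝ)) := by
          apply mul_le_mul_of_nonneg_left _ hN0.le
          linarith
      _ = 3*(N:ℝ)^2 := by ring
  calc 2*(f x - f y) = ∑ t ∈ Finset.range L, 2 * d t := by
        rw [htel, Finset.mul_sum]
    _ ≤ ∑ t ∈ Finset.range L, (Pt t * (d t)^2 + (N:ℝ) * (G.degree (v t))) :=
        Finset.sum_le_sum hstep
    _ = (∑ t ∈ Finset.range L, Pt t * (d t)^2)
        + ∑ t ∈ Finset.range L, (N:ℝ) * (G.degree (v t)) := Finset.sum_add_distrib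
    _ ≤ f ⬝ᵥ (Am G).mulVec f + 3*(N:ℝ)^2 := by linarith

end MT12

namespace MT12
open Finset SimpleGraph
open scoped Matrix

variable {N : ℕ} {G : SimpleGraph (Fin N)} [DecidableRel G.Adj]

lemma Z_mulVec_eval (hN : 2 ≤ N) (hconn : G.Connected) (e : Fin N → ℝ) :
    (Am G).mulVec ((Zm G).mulVec e) = e := by
  rw [Matrix.mulVec_mulVec, AZ hN hconn]
  simp

lemma Q_eq (hN : 2 ≤ N) (hconn : G.Connected) (e : Fin N → ℝ) :
    ((Zm G).mulVec e) ⬝ᵥ (Am G).mulVec ((Zm G).mulVec e) = e ⬝ᵥ ((Zm G).mulVec e) := by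
  rw [Z_mulVec_eval hN hconn]
  exact dotProduct_comm _ _

lemma dot_single (g : Fin N → ℝ) (x : Fin N) :
    ∑ k, g k * (if k = x then (1:ℝ) else 0) = g x := by
  simp

lemma R_le (hN : 2 ≤ N) (hconn : G.Connected) (x y : Fin N) (hxy : x ≠ y) :
    Zm G x x + Zm G y y - 2 * Zm G x y ≤ 3*(N:ℝ)^2 := by
  set e : Fin N → ℝ := fun u => (if u = x then (1:ℝ) else 0) - (if u = y then 1 else 0) with he
  set fs : Fin N → ℝ := (Zm G).mulVec e with hfs
  have hfs_eval : ∀ u, fs u = Zm G u x - Zm G u y := by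
    intro u
    rw [hfs]
    unfold Matrix.mulVec dotProduct
    simp only [he]
    have : ∀ k, Zm G u k * ((if k = x then (1:ℝ) else 0) - (if k = y then 1 else 0))
        = Zm G u k * (if k = x then (1:ℝ) else 0) - Zm G u k * (if k = y then 1 else 0) := by
      intro k; ring
    rw [Finset.sum_congr rfl (fun k _ => this k), Finset.sum_sub_distrib,
      dot_single, dot_single]
  have hval : e ⬝ᵥ fs = Zm G x x + Zm G y y - 2 * Zm G x y := by
    unfold dotProduct
    have : ∀ u, e u * fs u
        = fs u * (if u = x then (1:ℝ) else 0) - fs u * (if u = y then 1 else 0) := by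
      intro u; rw [he]; ring
    rw [Finset.sum_congr rfl (fun u _ => this u), Finset.sum_sub_distrib,
      dot_single, dot_single, hfs_eval, hfs_eval]
    rw [Zm_symm y x]
    ring
  have hQ : fs ⬝ᵥ (Am G).mulVec fs = e ⬝ᵥ fs := Q_eq hN hconn e
  have hkey := key_ineq hN hconn fs x y
  have hfx : fs x - fs y = Zm G x x + Zm G y y - 2 * Zm G x y := by
    rw [hfs_eval, hfs_eval, Zm_symm y x]
    ring
  rw [hfx, hQ, hval] at hkey
  linarith

lemma R_nonneg (hN : 2 ≤ N) (hconn : G.Connected) (x y : Fin N) :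
    0 ≤ Zm G x x + Zm G y y - 2 * Zm G x y := by
  by_cases hxy : x = y
  · subst hxy; ring_nf; exact le_refl 0
  set e : Fin N → ℝ := fun u => (if u = x then (1:ℝ) else 0) - (if u = y then 1 else 0) with he
  set fs : Fin N → ℝ := (Zm G).mulVec e with hfs
  have hfs_eval : ∀ u, fs u = Zm G u x - Zm G u y := by
    intro u
    rw [hfs]
    unfold Matrix.mulVec dotProduct
    simp only [he]
    have : ∀ k, Zm G u k * ((if k = x then (1:ℝ) else 0) - (if k = y then 1 else 0))
        = Zm G u k * (if k = x then (1:ℝ) else 0) - Zm G u k * (if k = y then 1 else 0) := by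
      intro k; ring
    rw [Finset.sum_congr rfl (fun k _ => this k), Finset.sum_sub_distrib,
      dot_single, dot_single]
  have hval : e ⬝ᵥ fs = Zm G x x + Zm G y y - 2 * Zm G x y := by
    unfold dotProduct
    have : ∀ u, e u * fs u
        = fs u * (if u = x then (1:ℝ) else 0) - fs u * (if u = y then 1 else 0) := by
      intro u; rw [he]; ring
    rw [Finset.sum_congr rfl (fun u _ => this u), Finset.sum_sub_distrib,
      dot_single, dot_single, hfs_eval, hfs_eval]
    rw [Zm_symm y x]
    ring
  have hQ : fs ⬝ᵥ (Am G).mulVec fs = e ⬝ᵥ fs := Q_eq hN hconn e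
  have := quad_nonneg hN hconn fs
  rw [hQ, hval] at this
  exact this

lemma Zdiag_bounds (hN : 2 ≤ N) (hconn : G.Connected) (x : Fin N) :
    0 ≤ Zm G x x ∧ Zm G x x ≤ 3*(N:ℝ)^2 + 1 := by
  have hN0 : (0:ℝ) < (N:ℝ) := by exact_mod_cast (by omega : 0 < N)
  set e : Fin N → ℝ := fun u => (if u = x then (1:ℝ) else 0) - (N:ℝ)⁻¹ with he
  set fs : Fin N → ℝ := (Zm G).mulVec e with hfs
  have hfs_eval : ∀ u, fs u = Zm G u x - (N:ℝ)⁻¹ := by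
    intro u
    rw [hfs]
    unfold Matrix.mulVec dotProduct
    simp only [he]
    have : ∀ k, Zm G u k * ((if k = x then (1:ℝ) else 0) - (N:ℝ)⁻¹)
        = Zm G u k * (if k = x then (1:ℝ) else 0) - Zm G u k * (N:ℝ)⁻¹ := by
      intro k; ring
    rw [Finset.sum_congr rfl (fun k _ => this k), Finset.sum_sub_distrib, dot_single,
      ← Finset.sum_mul, Z_row_sum hN hconn, one_mul]
  have hsumfs : ∑ u, fs u = 0 := by
    rw [Finset.sum_congr rfl (fun u _ => hfs_eval u), Finset.sum_sub_distrib,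
      Z_col_sum hN hconn]
    simp only [Finset.sum_const, Finset.card_univ, Fintype.card_fin, nsmul_eq_mul]
    rw [mul_inv_cancel₀ hN0.ne']
    ring
  have hval : e ⬝ᵥ fs = Zm G x x - (N:ℝ)⁻¹ := by
    unfold dotProduct
    have : ∀ u, e u * fs u
        = fs u * (if u = x then (1:ℝ) else 0) - (N:ℝ)⁻¹ * fs u := by
      intro u; rw [he]; ring
    rw [Finset.sum_congr rfl (fun u _ => this u), Finset.sum_sub_distrib, dot_single,
      ← Finset.mul_sum, hsumfs, mul_zero, hfs_eval]
    ring
  have hQ : fs ⬝ᵥ (Am G).mulVec fs = e ⬝ᵥ fs := Q_eq hN hconn e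
  have hQnn := quad_nonneg hN hconn fs
  constructor
  · rw [hQ, hval] at hQnn
    have : (0:ℝ) < (N:ℝ)⁻¹ := by positivity
    linarith
  · -- average of key inequality over y
    have havg : 2 * (e ⬝ᵥ fs) ≤ fs ⬝ᵥ (Am G).mulVec fs + 3*(N:ℝ)^2 := by
      have hterm : ∀ y : Fin N, 2*(fs x - fs y) ≤ fs ⬝ᵥ (Am G).mulVec fs + 3*(N:ℝ)^2 :=
        fun y => key_ineq hN hconn fs x y
      have hsum : ∑ y : Fin N, 2*(fs x - fs y)
          ≤ (N:ℝ) * (fs ⬝ᵥ (Am G).mulVec fs + 3*(N:ℝ)^2) := by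
        calc ∑ y : Fin N, 2*(fs x - fs y)
            ≤ ∑ _y : Fin N, (fs ⬝ᵥ (Am G).mulVec fs + 3*(N:ℝ)^2) :=
              Finset.sum_le_sum (fun y _ => hterm y)
          _ = (N:ℝ) * (fs ⬝ᵥ (Am G).mulVec fs + 3*(N:ℝ)^2) := by
              rw [Finset.sum_const, Finset.card_univ, Fintype.card_fin, nsmul_eq_mul]
      have hlhs : ∑ y : Fin N, 2*(fs x - fs y) = (N:ℝ) * (2 * (e ⬝ᵥ fs)) := by
        rw [hval]
        have : ∀ y : Fin N, 2*(fs x - fs y) = 2*fs x - 2*fs y := fun y => by ring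
        rw [Finset.sum_congr rfl (fun y _ => this y), Finset.sum_sub_distrib]
        simp only [Finset.sum_const, Finset.card_univ, Fintype.card_fin, nsmul_eq_mul]
        have h1 : ∑ y : Fin N, 2 * fs y = 2 * ∑ y, fs y := by rw [Finset.mul_sum]
        rw [h1, hsumfs, mul_zero, sub_zero]
        have h2 : fs x = Zm G x x - (N:ℝ)⁻¹ := hfs_eval x
        rw [h2]
      rw [hlhs] at hsum
      have := (mul_le_mul_iff_right₀ hN0).mp hsum
      exact this
    rw [hQ, hval] at havg
    have hNinv : (0:ℝ) < (N:ℝ)⁻¹ := by positivity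
    have hNinv1 : (N:ℝ)⁻¹ ≤ 1 := by
      rw [inv_le_one_iff₀]
      right
      exact_mod_cast (by omega : 1 ≤ N)
    linarith

end MT12

namespace MT12
open Finset SimpleGraph
open scoped Matrix

variable {N : ℕ} {G : SimpleGraph (Fin N)} [DecidableRel G.Adj]

/-- extend a neighbor-sum against `PB` to a full sum -/
lemma nbr_sum_mul (x : Fin N) (g : Fin N → ℝ) :
    ∑ i ∈ G.neighborFinset x, PB G x i * g i
      = (∑ i, PB G x i * g i) - PB G x x * g x := by
  classical
  have hsub : G.neighborFinset x ⊆ Finset.univ.erase x := by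
    intro i hi
    simp only [Finset.mem_erase, Finset.mem_univ, and_true]
    intro hix
    exact (G.mem_neighborFinset x i |>.mp hi).ne' (by rw [hix])
  have hzero : ∀ i ∈ Finset.univ.erase x, i ∉ G.neighborFinset x → PB G x i * g i = 0 := by
    intro i hi hni
    have hne : x ≠ i := fun h => (Finset.mem_erase.mp hi).1 h.symm
    rw [PB_of_not_adj hne (by simpa [G.mem_neighborFinset] using hni), zero_mul]
  have herase : ∑ i ∈ Finset.univ.erase x, PB G x i * g i
      = ∑ i ∈ G.neighborFinset x, PB G x i * g i := (Finset.sum_subset hsub hzero).symm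
  have hsplit : ∑ i, PB G x i * g i
      = PB G x x * g x + ∑ i ∈ Finset.univ.erase x, PB G x i * g i :=
    (Finset.add_sum_erase _ (fun i => PB G x i * g i) (Finset.mem_univ x)).symm
  rw [hsplit, herase]
  ring

variable (G) in
/-- the supersolution -/
noncomputable def phi : Fin N → Fin N → ℝ :=
  fun x y => ((N:ℝ)/2) * ((8*(N:ℝ)^2 + 2) - Zm G x y)

lemma sum_phi_split (s : Finset (Fin N)) (w : Fin N → ℝ) (g : Fin N → ℝ) :
    ∑ i ∈ s, w i * (((N:ℝ)/2) * ((8*(N:ℝ)^2 + 2) - g i))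
      = ((N:ℝ)/2) * (8*(N:ℝ)^2 + 2) * (∑ i ∈ s, w i)
        - ((N:ℝ)/2) * (∑ i ∈ s, w i * g i) := by
  rw [Finset.mul_sum, Finset.mul_sum, ← Finset.sum_sub_distrib]
  exact Finset.sum_congr rfl (fun i _ => by ring)

lemma C_ge (hN : 2 ≤ N) (hconn : G.Connected) (x y : Fin N) :
    Zm G x x + Zm G y y - Zm G x y ≤ 8*(N:ℝ)^2 + 2 := by
  have hNsq : (4:ℝ) ≤ (N:ℝ)^2 := by
    have : (2:ℝ) ≤ (N:ℝ) := by exact_mod_cast hN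
    nlinarith
  by_cases hxy : x = y
  · subst hxy
    have := (Zdiag_bounds hN hconn x).2
    nlinarith
  · have h1 := R_le hN hconn x y hxy
    have h2 := (Zdiag_bounds hN hconn x).2
    have h3 := (Zdiag_bounds hN hconn y).2
    nlinarith

lemma phi_le (hN : 2 ≤ N) (hconn : G.Connected) (x y : Fin N) :
    phi G x y ≤ 5*(N:ℝ)^3 := by
  have hN0 : (0:ℝ) < (N:ℝ) := by exact_mod_cast (by omega : 0 < N)
  have hNsq : (4:ℝ) ≤ (N:ℝ)^2 := by
    have : (2:ℝ) ≤ (N:ℝ) := by exact_mod_cast hN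
    nlinarith
  have hneg : -Zm G x y ≤ 3*(N:ℝ)^2/2 := by
    by_cases hxy : x = y
    · subst hxy
      have := (Zdiag_bounds hN hconn x).1
      nlinarith
    · have h1 := R_le hN hconn x y hxy
      have h2 := (Zdiag_bounds hN hconn x).1
      have h3 := (Zdiag_bounds hN hconn y).1
      nlinarith
  unfold phi
  nlinarith [hneg, hN0.le, hNsq]

lemma phi_supersol (hN : 2 ≤ N) (hconn : G.Connected) (x y : Fin N) (hxy : x ≠ y) :
    1 + (∑ i ∈ (G.neighborFinset x).erase y, PB G x i * phi G i y)
      + (∑ j ∈ (G.neighborFinset y).erase x, PB G y j * phi G x j)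
    ≤ ((∑ i ∈ G.neighborFinset x, PB G x i) + (∑ j ∈ G.neighborFinset y, PB G y j)
        - PB G x y) * phi G x y := by
  have hN0 : (0:ℝ) < (N:ℝ) := by exact_mod_cast (by omega : 0 < N)
  have hnn : (N:ℝ) * (N:ℝ)⁻¹ = 1 := mul_inv_cancel₀ hN0.ne'
  have hAx := PB_nbr_sum hN hconn x
  have hAy := PB_nbr_sum hN hconn y
  -- full sums against Z
  have hTx : ∑ i, PB G x i * Zm G i y = Zm G x y + (N:ℝ)⁻¹ := by
    have := PZ_entry hN hconn x y
    rw [if_neg hxy] at this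
    linarith
  have hTy : ∑ j, PB G y j * Zm G x j = Zm G x y + (N:ℝ)⁻¹ := by
    have h1 : ∑ j, PB G y j * Zm G x j = ∑ j, PB G y j * Zm G j x :=
      Finset.sum_congr rfl (fun j _ => by rw [Zm_symm x j])
    have h2 := PZ_entry hN hconn y x
    rw [if_neg (Ne.symm hxy)] at h2
    rw [h1, h2, Zm_symm y x]
    ring
  have hTx' : ∑ i ∈ G.neighborFinset x, PB G x i * Zm G i y
      = Zm G x y + (N:ℝ)⁻¹ - PB G x x * Zm G x y := by
    rw [nbr_sum_mul, hTx]
  have hTy' : ∑ j ∈ G.neighborFinset y, PB G y j * Zm G x j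
      = Zm G x y + (N:ℝ)⁻¹ - PB G y y * Zm G x y := by
    rw [nbr_sum_mul y (fun j => Zm G x j), hTy, Zm_symm x y]
  have hsplitx : ∑ i ∈ (G.neighborFinset x).erase y, PB G x i * phi G i y
      = ((N:ℝ)/2) * (8*(N:ℝ)^2 + 2) * (∑ i ∈ (G.neighborFinset x).erase y, PB G x i)
        - ((N:ℝ)/2) * (∑ i ∈ (G.neighborFinset x).erase y, PB G x i * Zm G i y) :=
    sum_phi_split _ _ _
  have hsplity : ∑ j ∈ (G.neighborFinset y).erase x, PB G y j * phi G x j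
      = ((N:ℝ)/2) * (8*(N:ℝ)^2 + 2) * (∑ j ∈ (G.neighborFinset y).erase x, PB G y j)
        - ((N:ℝ)/2) * (∑ j ∈ (G.neighborFinset y).erase x, PB G y j * Zm G x j) :=
    sum_phi_split _ _ _
  by_cases hadj : G.Adj x y
  · -- adjacent case
    have hyx : y ∈ G.neighborFinset x := (G.mem_neighborFinset x y).mpr hadj
    have hxy' : x ∈ G.neighborFinset y := (G.mem_neighborFinset y x).mpr hadj.symm
    have he1 : ∑ i ∈ (G.neighborFinset x).erase y, PB G x i
        = (1 - PB G x x) - PB G x y := by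
      have := Finset.add_sum_erase _ (fun i => PB G x i) hyx
      rw [hAx] at this
      linarith
    have he2 : ∑ i ∈ (G.neighborFinset x).erase y, PB G x i * Zm G i y
        = (Zm G x y + (N:ℝ)⁻¹ - PB G x x * Zm G x y) - PB G x y * Zm G y y := by
      have := Finset.add_sum_erase _ (fun i => PB G x i * Zm G i y) hyx
      rw [hTx'] at this
      linarith
    have he3 : ∑ j ∈ (G.neighborFinset y).erase x, PB G y j
        = (1 - PB G y y) - PB G x y := by
      have := Finset.add_sum_erase _ (fun j => PB G y j) hxy'
      beta_reduce at this
      rw [hAy, PB_symm y x] at this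
      linarith
    have he4 : ∑ j ∈ (G.neighborFinset y).erase x, PB G y j * Zm G x j
        = (Zm G x y + (N:ℝ)⁻¹ - PB G y y * Zm G x y) - PB G x y * Zm G x x := by
      have := Finset.add_sum_erase _ (fun j => PB G y j * Zm G x j) hxy'
      beta_reduce at this
      rw [hTy', PB_symm y x] at this
      linarith
    rw [hsplitx, hsplity, he1, he2, he3, he4, hAx, hAy]
    have hC := C_ge hN hconn x y
    have hP : 0 ≤ PB G x y := PB_offdiag_nonneg hxy
    unfold phi
    nlinarith [mul_nonneg (mul_nonneg (by linarith : (0:ℝ) ≤ (N:ℝ)/2) hP)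
      (sub_nonneg.mpr hC), hnn]
  · -- non-adjacent case
    have hyx : y ∉ G.neighborFinset x := fun h => hadj ((G.mem_neighborFinset x y).mp h)
    have hxy' : x ∉ G.neighborFinset y := fun h => hadj (((G.mem_neighborFinset y x).mp h).symm)
    have hPxy0 : PB G x y = 0 := PB_of_not_adj hxy hadj
    rw [Finset.erase_eq_of_notMem hyx] at hsplitx
    rw [Finset.erase_eq_of_notMem hxy'] at hsplity
    rw [Finset.erase_eq_of_notMem hyx, Finset.erase_eq_of_notMem hxy',
      hsplitx, hsplity, hTx', hTy', hAx, hAy, hPxy0]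
    unfold phi
    nlinarith [hnn]

end MT12

namespace MT12
open Finset SimpleGraph
open scoped Matrix

variable {N : ℕ} {G : SimpleGraph (Fin N)} [DecidableRel G.Adj]

lemma m_le_phi (hN : 2 ≤ N) (hconn : G.Connected) (m : Fin N → Fin N → ℝ)
    (hm : ∀ x y, x ≠ y →
      ((∑ i ∈ G.neighborFinset x, PB G x i) + (∑ j ∈ G.neighborFinset y, PB G y j)
          - PB G x y) * m x y
        = 1 + (∑ i ∈ (G.neighborFinset x).erase y, PB G x i * m i y)
            + (∑ j ∈ (G.neighborFinset y).erase x, PB G y j * m x j)) :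
    ∀ x y, x ≠ y → m x y ≤ phi G x y := by
  by_contra hcon
  push_neg at hcon
  obtain ⟨x0, y0, hne0, hlt⟩ := hcon
  classical
  set S : Finset (Fin N × Fin N) := Finset.univ.filter (fun p => p.1 ≠ p.2) with hSdef
  have hS0 : (x0, y0) ∈ S := by simp [hSdef, hne0]
  have hSne : S.Nonempty := ⟨_, hS0⟩
  obtain ⟨p, hpS, hpmax⟩ := Finset.exists_max_image S (fun p => m p.1 p.2 - phi G p.1 p.2) hSne
  set H : ℝ := m p.1 p.2 - phi G p.1 p.2 with hHdef
  have hHpos : 0 < H := by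
    have := hpmax (x0, y0) hS0
    simp only at this
    linarith
  have hub : ∀ u w : Fin N, u ≠ w → m u w - phi G u w ≤ H := by
    intro u w hne
    have := hpmax (u, w) (by simp [hSdef, hne])
    simpa using this
  have hpne : p.1 ≠ p.2 := by
    have := hpS
    rw [hSdef, Finset.mem_filter] at this
    exact this.2
  have main : ∀ k : ℕ, ∀ u w : Fin N, u ≠ w → m u w - phi G u w = H →
      G.dist u w ≤ k → False := by
    intro k
    induction k with
    | zero =>
      intro u w hne hval hd
      exact hne (hconn.dist_eq_zero_iff.mp (Nat.le_zero.mp hd))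
    | succ k ih =>
      intro u w hne hval hd
      have heq := hm u w hne
      have hsup := phi_supersol hN hconn u w hne
      have hAx := PB_nbr_sum hN hconn u
      have hAy := PB_nbr_sum hN hconn w
      -- difference form
      have hdiff1 : (∑ i ∈ (G.neighborFinset u).erase w, PB G u i * m i w)
          - (∑ i ∈ (G.neighborFinset u).erase w, PB G u i * phi G i w)
          = ∑ i ∈ (G.neighborFinset u).erase w, PB G u i * (m i w - phi G i w) := by
        rw [← Finset.sum_sub_distrib]
        exact Finset.sum_congr rfl (fun i _ => by ring)
      have hdiff2 : (∑ j ∈ (G.neighborFinset w).erase u, PB G w j * m u j)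
          - (∑ j ∈ (G.neighborFinset w).erase u, PB G w j * phi G u j)
          = ∑ j ∈ (G.neighborFinset w).erase u, PB G w j * (m u j - phi G u j) := by
        rw [← Finset.sum_sub_distrib]
        exact Finset.sum_congr rfl (fun j _ => by ring)
      set Sc : ℝ := (∑ i ∈ G.neighborFinset u, PB G u i)
          + (∑ j ∈ G.neighborFinset w, PB G w j) - PB G u w with hScdef
      have hSc : Sc * H ≤ (∑ i ∈ (G.neighborFinset u).erase w, PB G u i * (m i w - phi G i w))
          + (∑ j ∈ (G.neighborFinset w).erase u, PB G w j * (m u j - phi G u j)) := by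
        have h1 : Sc * (m u w - phi G u w) = Sc * m u w - Sc * phi G u w := by ring
        rw [← hval]
        linarith [heq, hsup, hdiff1, hdiff2]
      -- termwise bounds
      have hb1 : ∀ i ∈ (G.neighborFinset u).erase w,
          PB G u i * (m i w - phi G i w) ≤ PB G u i * H := by
        intro i hi
        have hiw : i ≠ w := (Finset.mem_erase.mp hi).1
        have hui : G.Adj u i := (G.mem_neighborFinset u i).mp (Finset.mem_of_mem_erase hi)
        exact mul_le_mul_of_nonneg_left (hub i w hiw) (PB_offdiag_nonneg hui.ne)
      have hb2 : ∀ j ∈ (G.neighborFinset w).erase u,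
          PB G w j * (m u j - phi G u j) ≤ PB G w j * H := by
        intro j hj
        have hju : j ≠ u := (Finset.mem_erase.mp hj).1
        have hwj : G.Adj w j := (G.mem_neighborFinset w j).mp (Finset.mem_of_mem_erase hj)
        exact mul_le_mul_of_nonneg_left (hub u j (fun h => hju h.symm)) (PB_offdiag_nonneg hwj.ne)
      by_cases hadj : G.Adj u w
      · -- adjacent: contradiction
        have hyx : w ∈ G.neighborFinset u := (G.mem_neighborFinset u w).mpr hadj
        have hxy' : u ∈ G.neighborFinset w := (G.mem_neighborFinset w u).mpr hadj.symm
        have he1 : ∑ i ∈ (G.neighborFinset u).erase w, PB G u i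
            = (1 - PB G u u) - PB G u w := by
          have := Finset.add_sum_erase _ (fun i => PB G u i) hyx
          beta_reduce at this
          rw [hAx] at this
          linarith
        have he3 : ∑ j ∈ (G.neighborFinset w).erase u, PB G w j
            = (1 - PB G w w) - PB G u w := by
          have := Finset.add_sum_erase _ (fun j => PB G w j) hxy'
          beta_reduce at this
          rw [hAy, PB_symm w u] at this
          linarith
        have hsum1 : ∑ i ∈ (G.neighborFinset u).erase w, PB G u i * (m i w - phi G i w)
            ≤ ((1 - PB G u u) - PB G u w) * H := by
          calc ∑ i ∈ (G.neighborFinset u).erase w, PB G u i * (m i w - phi G i w)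
              ≤ ∑ i ∈ (G.neighborFinset u).erase w, PB G u i * H := Finset.sum_le_sum hb1
            _ = ((1 - PB G u u) - PB G u w) * H := by rw [← Finset.sum_mul, he1]
        have hsum2 : ∑ j ∈ (G.neighborFinset w).erase u, PB G w j * (m u j - phi G u j)
            ≤ ((1 - PB G w w) - PB G u w) * H := by
          calc ∑ j ∈ (G.neighborFinset w).erase u, PB G w j * (m u j - phi G u j)
              ≤ ∑ j ∈ (G.neighborFinset w).erase u, PB G w j * H := Finset.sum_le_sum hb2
            _ = ((1 - PB G w w) - PB G u w) * H := by rw [← Finset.sum_mul, he3]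
        have hScval : Sc = (1 - PB G u u) + (1 - PB G w w) - PB G u w := by
          rw [hScdef, hAx, hAy]
        have hPH : 0 < PB G u w * H := mul_pos (PB_adj_pos hN hconn hadj) hHpos
        rw [hScval] at hSc
        nlinarith [hSc, hsum1, hsum2, hPH]
      · -- non-adjacent: propagate the maximum one step along a geodesic
        have hPuw : PB G u w = 0 := PB_of_not_adj hne hadj
        have hyx : w ∉ G.neighborFinset u := fun h => hadj ((G.mem_neighborFinset u w).mp h)
        have hxy' : u ∉ G.neighborFinset w := fun h => hadj (((G.mem_neighborFinset w u).mp h).symm)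
        rw [Finset.erase_eq_of_notMem hyx, Finset.erase_eq_of_notMem hxy'] at hSc
        have hScval : Sc = (1 - PB G u u) + (1 - PB G w w) := by
          rw [hScdef, hAx, hAy, hPuw]
          ring
        -- deficit sums
        have hD1nn : ∀ i ∈ G.neighborFinset u, 0 ≤ PB G u i * (H - (m i w - phi G i w)) := by
          intro i hi
          have hui : G.Adj u i := (G.mem_neighborFinset u i).mp hi
          have hiw : i ≠ w := fun h => hyx (h ▸ hi)
          exact mul_nonneg (PB_offdiag_nonneg hui.ne) (by linarith [hub i w hiw])
        have hD2nn : ∀ j ∈ G.neighborFinset w, 0 ≤ PB G w j * (H - (m u j - phi G u j)) := by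
          intro j hj
          have hwj : G.Adj w j := (G.mem_neighborFinset w j).mp hj
          have hju : u ≠ j := fun h => hxy' (h ▸ hj)
          exact mul_nonneg (PB_offdiag_nonneg hwj.ne) (by linarith [hub u j hju])
        have hD1eq : ∑ i ∈ G.neighborFinset u, PB G u i * (H - (m i w - phi G i w))
            = (1 - PB G u u) * H
              - ∑ i ∈ G.neighborFinset u, PB G u i * (m i w - phi G i w) := by
          rw [← hAx, Finset.sum_mul, ← Finset.sum_sub_distrib]
          exact Finset.sum_congr rfl (fun i _ => by ring)
        have hD2eq : ∑ j ∈ G.neighborFinset w, PB G w j * (H - (m u j - phi G u j))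
            = (1 - PB G w w) * H
              - ∑ j ∈ G.neighborFinset w, PB G w j * (m u j - phi G u j) := by
          rw [← hAy, Finset.sum_mul, ← Finset.sum_sub_distrib]
          exact Finset.sum_congr rfl (fun j _ => by ring)
        have hD1z : ∑ i ∈ G.neighborFinset u, PB G u i * (H - (m i w - phi G i w)) = 0 := by
          have h1 : 0 ≤ ∑ i ∈ G.neighborFinset u, PB G u i * (H - (m i w - phi G i w)) :=
            Finset.sum_nonneg hD1nn
          have h2 : 0 ≤ ∑ j ∈ G.neighborFinset w, PB G w j * (H - (m u j - phi G u j)) :=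
            Finset.sum_nonneg hD2nn
          rw [hScval] at hSc
          rw [hD1eq]
          rw [hD2eq] at h2
          linarith
        have hterm := (Finset.sum_eq_zero_iff_of_nonneg hD1nn).mp hD1z
        -- find the geodesic neighbor
        have hdpos : 2 ≤ G.dist u w := by
          have h1 : G.dist u w ≠ 0 := fun h => hne (hconn.dist_eq_zero_iff.mp h)
          have h2 : G.dist u w ≠ 1 := fun h => hadj (SimpleGraph.dist_eq_one_iff_adj.mp h)
          omega
        obtain ⟨ww, hww⟩ := hconn.exists_walk_length_eq_dist u w
        set v : Fin N := ww.getVert 1 with hvdef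
        have hlen : 0 < ww.length := by omega
        have hadjuv : G.Adj u v := by
          have := SimpleGraph.Walk.adj_getVert_succ ww (i := 0) hlen
          simpa [SimpleGraph.Walk.getVert_zero] using this
        have hvmem : v ∈ G.neighborFinset u := (G.mem_neighborFinset u v).mpr hadjuv
        have hdvw : G.dist v w ≤ ww.length - 1 := by
          have := dist_getVert_le hconn ww 1 ww.length (by omega)
          rw [SimpleGraph.Walk.getVert_length] at this
          exact this
        have hvw : v ≠ w := by
          intro h
          have htri : G.dist u w ≤ G.dist u v + G.dist v w := hconn.dist_triangle
          have h1 : G.dist u v = 1 := SimpleGraph.dist_eq_one_iff_adj.mpr hadjuv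
          have h2 : G.dist v w = 0 := by rw [h]; exact SimpleGraph.dist_self
          omega
        have hvalv : m v w - phi G v w = H := by
          have := hterm v hvmem
          have hP := PB_adj_pos hN hconn hadjuv
          rcases mul_eq_zero.mp this with h | h
          · exact absurd h hP.ne'
          · linarith
        exact ih v w hvw hvalv (by omega)
  exact main (G.dist p.1 p.2) p.1 p.2 hpne rfl le_rfl

end MT12


/-- for a connected simple graph on `N ≥ 2` vertices, any meeting-time
solution `m` for the paired process `X` satisfies `m x y < 12 N³` for all vertices. -/
theorem meeting_time_lt_twelve_N_cubed {N : ℕ} (hN : 2 ≤ N)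
    (G : SimpleGraph (Fin N)) [DecidableRel G.Adj] (hconn : G.Connected)
    (m : Fin N → Fin N → ℝ)
    (hsym : ∀ x y, m x y = m y x) (hdiag : ∀ x, m x x = 0)
    (hm : ∀ x y, x ≠ y →
      ((∑ i ∈ G.neighborFinset x, PB G x i) + (∑ j ∈ G.neighborFinset y, PB G y j)
          - PB G x y) * m x y
        = 1 + (∑ i ∈ (G.neighborFinset x).erase y, PB G x i * m i y)
            + (∑ j ∈ (G.neighborFinset y).erase x, PB G y j * m x j)) :
    ∀ x y, m x y < 12 * (N : ℝ) ^ 3 := by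
  have hN0 : (0:ℝ) < (N:ℝ) := by exact_mod_cast (by omega : 0 < N)
  have hcube : (0:ℝ) < (N:ℝ)^3 := by positivity
  intro x y
  by_cases hxy : x = y
  · subst hxy
    rw [hdiag]
    nlinarith
  · have h1 := MT12.m_le_phi hN hconn m hm x y hxy
    have h2 := MT12.phi_le hN hconn x y
    nlinarith
end

section
/- (Lemma 6) Suppose the quantized consensus update is applied to an edge {i,j} at which a non-trivial meeting occurs, i.e., Q_i ≤ Q_j − 2, producing Q' with Q'_i = Q_i + 1, Q'_j = Q_j − 1, and Q'_k = Q_k for k ∉ {i,j}. Then the Lyapunov function decreases by at least 2: L(Q) ≥ L(Q') + 2. -/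
/-- Lemma 6: if the quantized consensus update is applied to an edge
`{i,j}` at which a non-trivial meeting occurs (`Q i ≤ Q j − 2`), producing `Q'` with
`Q' i = Q i + 1`, `Q' j = Q j − 1` and all other coordinates unchanged, then the
Lyapunov function `L(Q) = ∑ k (Q k − Q̄)²` (with `Q̄ = (∑ k Q k)/N`) decreases by at
least 2: `L(Q) ≥ L(Q') + 2`. -/
theorem lyapunov_decreases_by_two {N : ℕ} (hN : 1 ≤ N)
    (Q Q' : Fin N → ℤ) (i j : Fin N) (hij : i ≠ j)
    (hnt : Q i ≤ Q j - 2)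
    (hQi : Q' i = Q i + 1) (hQj : Q' j = Q j - 1)
    (hrest : ∀ k, k ≠ i → k ≠ j → Q' k = Q k) :
    ∑ k, ((Q k : ℝ) - (∑ l, (Q l : ℝ)) / N) ^ 2
      ≥ (∑ k, ((Q' k : ℝ) - (∑ l, (Q' l : ℝ)) / N) ^ 2) + 2 := by
  have hsum : ∑ l, (Q' l : ℝ) = ∑ l, (Q l : ℝ) := by
    have h0 : ∑ l, ((Q' l : ℝ) - (Q l : ℝ)) = 0 := by
      rw [Finset.sum_eq_add i j hij
        (fun c _ hc => by rw [hrest c hc.1 hc.2]; ring)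
        (fun h => absurd (Finset.mem_univ i) h)
        (fun h => absurd (Finset.mem_univ j) h)]
      rw [hQi, hQj]; push_cast; ring
    have := Finset.sum_sub_distrib (f := fun l => (Q' l : ℝ)) (g := fun l => (Q l : ℝ))
      (s := Finset.univ)
    rw [this] at h0
    linarith
  set m : ℝ := (∑ l, (Q l : ℝ)) / N with hm
  rw [hsum]
  have hdiff : ∑ k, (((Q k : ℝ) - m) ^ 2 - ((Q' k : ℝ) - m) ^ 2)
      = 2 * ((Q j : ℝ) - (Q i : ℝ)) - 2 := by
    rw [Finset.sum_eq_add i j hij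
      (fun c _ hc => by rw [hrest c hc.1 hc.2]; ring)
      (fun h => absurd (Finset.mem_univ i) h)
      (fun h => absurd (Finset.mem_univ j) h)]
    rw [hQi, hQj]; push_cast; ring
  have hsplit := Finset.sum_sub_distrib (f := fun k => ((Q k : ℝ) - m) ^ 2)
    (g := fun k => ((Q' k : ℝ) - m) ^ 2) (s := Finset.univ)
  rw [hsplit] at hdiff
  have hnt' : (Q i : ℝ) ≤ (Q j : ℝ) - 2 := by exact_mod_cast hnt
  linarith
end
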